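/- arXiv:2004.07718 — 7 statements merged into one kernel-verified Lean document; each statement's English description precedes it below -/
import Mathlib

section
/- Let (V,d) be a metric space, k ≥ 1 an integer, z ≥ 1 a real, and let ρ ≥ 1 and s ≥ 2 be reals. Suppose that for every weighted set X in V and every ε ∈ (0,1/4) there exists an ε-coreset for (k,z)-clustering on X having at most s·ε^{−ρ}·log₂(2+‖X‖₀) distinct points. Then there exists a constant C depending only on ρ such that for every weighted set X in V and every ε ∈ (0,1/4) there exists an ε-coreset for (k,z)-clustering on X having at most C·s·ε^{−ρ}·(1+log₂(s·ε^{−ρ}))^C distinct points. -/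
open Finset

/-- A weighted set in `V`: a finite set of points together with positive weights. -/
structure WSet (V : Type*) where
  pts : Finset V
  w : V → ℝ
  pos : ∀ x ∈ pts, 0 < w x

/-- `cost_z(X, C) = Σ_{x ∈ X} w_X(x) · d(x, C)^z`. -/
noncomputable def costz {V : Type*} [MetricSpace V] (z : ℝ) (X : WSet V) (C : Finset V) : ℝ :=
  ∑ x ∈ X.pts, X.w x * Metric.infDist x (C : Set V) ^ z

/-- `D` is an `ε`-coreset for `(k,z)`-clustering on `X`. -/
def IsCoreset {V : Type*} [MetricSpace V] (k : ℕ) (z ε : ℝ) (X D : WSet V) : Prop :=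
  D.pts ⊆ X.pts ∧ ∀ C : Finset V, C.Nonempty → C.card ≤ k →
    (1 - ε) * costz z X C ≤ costz z D C ∧ costz z D C ≤ (1 + ε) * costz z X C


section Helpers
variable {V : Type*} [MetricSpace V]

lemma costz_nonneg (z : ℝ) (X : WSet V) (C : Finset V) : 0 ≤ costz z X C :=
  Finset.sum_nonneg fun x hx =>
    mul_nonneg (X.pos x hx).le (Real.rpow_nonneg Metric.infDist_nonneg z)

lemma isCoreset_refl (k : ℕ) (z η : ℝ) (hη : 0 ≤ η) (X : WSet V) :
    IsCoreset k z η X X := by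
  refine ⟨subset_rfl, fun C _ _ => ?_⟩
  have h := costz_nonneg z X C
  constructor <;> nlinarith

lemma isCoreset_comp {k : ℕ} {z a b η : ℝ} {X D E : WSet V}
    (hXD : IsCoreset k z a X D) (hDE : IsCoreset k z b D E)
    (ha : 0 ≤ a) (hb : 0 ≤ b) (hab : a + b + a * b ≤ η) (hη : η ≤ 1) :
    IsCoreset k z η X E := by
  refine ⟨hDE.1.trans hXD.1, fun C hC hCk => ?_⟩
  obtain ⟨h1, h2⟩ := hXD.2 C hC hCk
  obtain ⟨h3, h4⟩ := hDE.2 C hC hCk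
  have hX := costz_nonneg z X C
  have hb1 : b ≤ 1 := by nlinarith
  constructor
  · nlinarith [mul_le_mul_of_nonneg_left h1 (show (0:ℝ) ≤ 1 - b by linarith),
      mul_le_mul_of_nonneg_right (show a + b - a*b ≤ η by nlinarith) hX]
  · nlinarith [mul_le_mul_of_nonneg_left h2 (show (0:ℝ) ≤ 1 + b by linarith),
      mul_le_mul_of_nonneg_right hab hX]

end Helpers

lemma exp_one_le_four : Real.exp 1 ≤ 4 := by nlinarith [Real.exp_one_lt_d9]

lemma one_le_log4 (x : ℝ) (hx : 0 ≤ x) : 1 ≤ Real.log (4 + x) := by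
  rw [Real.le_log_iff_exp_le (by linarith)]
  linarith [exp_one_le_four]

noncomputable def ll (x : ℝ) : ℝ := 1 + Real.log (Real.log (4 + x))

noncomputable def Phi (x : ℝ) : ℝ := (1 - 1 / ll x) / 2

lemma ll_eq (x : ℝ) : ll x = 1 + Real.log (Real.log (4 + x)) := rfl

lemma one_le_ll {x : ℝ} (hx : 0 ≤ x) : 1 ≤ ll x := by
  have h := one_le_log4 x hx
  have h2 : 0 ≤ Real.log (Real.log (4 + x)) := Real.log_nonneg h
  unfold ll; linarith

lemma ll_le_log {x : ℝ} (hx : 0 ≤ x) : ll x ≤ Real.log (4 + x) := by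
  have h := one_le_log4 x hx
  have h2 : Real.log (Real.log (4 + x)) ≤ Real.log (4 + x) - 1 :=
    Real.log_le_sub_one_of_pos (by linarith)
  unfold ll; linarith

lemma ll_mono {a b : ℝ} (ha : 0 ≤ a) (hab : a ≤ b) : ll a ≤ ll b := by
  have h1 : 1 ≤ Real.log (4 + a) := one_le_log4 a ha
  have h2 : Real.log (4 + a) ≤ Real.log (4 + b) := Real.log_le_log (by linarith) (by linarith)
  have h3 : Real.log (Real.log (4 + a)) ≤ Real.log (Real.log (4 + b)) :=
    Real.log_le_log (by linarith) h2
  unfold ll; linarith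

lemma phi_nonneg {x : ℝ} (hx : 0 ≤ x) : 0 ≤ Phi x := by
  have h := one_le_ll hx
  have : 1 / ll x ≤ 1 := by rw [div_le_one (by linarith)]; linarith
  unfold Phi; linarith

lemma phi_le_half {x : ℝ} (hx : 0 ≤ x) : Phi x ≤ 1 / 2 := by
  have h := one_le_ll hx
  have : 0 ≤ 1 / ll x := by positivity
  unfold Phi; linarith

lemma phi_mono {a b : ℝ} (ha : 0 ≤ a) (hab : a ≤ b) : Phi a ≤ Phi b := by
  have h1 := one_le_ll ha
  have h2 := ll_mono ha hab
  have : 1 / ll b ≤ 1 / ll a := one_div_le_one_div_of_le (by linarith) h2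
  unfold Phi; linarith

lemma log_le_two_sqrt {x : ℝ} (hx : 1 ≤ x) : Real.log x ≤ 2 * Real.sqrt x := by
  have h0 : (0:ℝ) ≤ x := by linarith
  have h1 : Real.log x = 2 * Real.log (Real.sqrt x) := by
    rw [Real.log_sqrt h0]; ring
  have h2 : Real.log (Real.sqrt x) ≤ Real.sqrt x - 1 :=
    Real.log_le_sub_one_of_pos (Real.sqrt_pos.mpr (by linarith))
  nlinarith [Real.sqrt_nonneg x]

lemma sqrt_self_bound (u aa q : ℝ) (hu : 0 ≤ u) (ha : 0 ≤ aa) (hq : 0 ≤ q)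
    (h : u ≤ aa + q * Real.sqrt u) : u ≤ 2 * aa + 4 * q ^ 2 := by
  have hs : Real.sqrt u ^ 2 = u := Real.sq_sqrt hu
  have hsn : 0 ≤ Real.sqrt u := Real.sqrt_nonneg u
  nlinarith [sq_nonneg (Real.sqrt u - 2 * q)]

lemma inv_log_bound (p A x : ℝ) (hp : 1 ≤ p) (hA : 4 ≤ A) (hx : 0 ≤ x)
    (h : x ≤ A * Real.log (4 + x) ^ p) :
    x ≤ A * (2 * Real.log (4 + A) + 64 * p ^ 2) ^ p := by
  set L := Real.log (4 + x) with hLdef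
  have hL1 : 1 ≤ L := one_le_log4 x hx
  have hL0 : (0:ℝ) < L := by linarith
  have hLp : 1 ≤ L ^ p := by
    calc (1:ℝ) = 1 ^ p := (Real.one_rpow p).symm
    _ ≤ L ^ p := Real.rpow_le_rpow (by norm_num) hL1 (by linarith)
  have h45 : 4 + x ≤ (4 + A) * L ^ p := by nlinarith
  have hlog1 : L ≤ Real.log (4 + A) + p * Real.log L := by
    calc L ≤ Real.log ((4 + A) * L ^ p) := Real.log_le_log (by linarith) h45
    _ = Real.log (4 + A) + p * Real.log L := by
        rw [Real.log_mul (by linarith) (by positivity), Real.log_rpow hL0]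
  have hlogL : Real.log L ≤ 2 * Real.sqrt L := log_le_two_sqrt hL1
  have hq : L ≤ Real.log (4 + A) + (2 * p) * Real.sqrt L := by
    nlinarith [Real.sqrt_nonneg L]
  have hLb : L ≤ 2 * Real.log (4 + A) + 4 * (2 * p) ^ 2 :=
    sqrt_self_bound L _ _ (by linarith) (Real.log_nonneg (by linarith)) (by linarith) hq
  have hfin : L ^ p ≤ (2 * Real.log (4 + A) + 64 * p ^ 2) ^ p :=
    Real.rpow_le_rpow hL0.le (by nlinarith) (by linarith)
  calc x ≤ A * L ^ p := h
  _ ≤ A * (2 * Real.log (4 + A) + 64 * p ^ 2) ^ p := by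
      apply mul_le_mul_of_nonneg_left hfin (by linarith)

lemma arith_base (p G x : ℝ) (hp : 3 ≤ p) (hG : 2 ≤ G) (hx : x ≤ 35 * p * G) :
    2 * x + 64 * p ^ 2 ≤ 180 * p ^ 2 * G := by
  have h1 : (0:ℝ) ≤ 32 * p ^ 2 * (G - 2) := by
    have : (0:ℝ) ≤ p ^ 2 := sq_nonneg p
    nlinarith
  have h2 : (0:ℝ) ≤ (p * G) * (148 * p - 70) := by
    have : (0:ℝ) ≤ p * G := by nlinarith
    nlinarith
  nlinarith

lemma arith_sq (x : ℝ) (hx : 1 ≤ x) : (1:ℝ) ≤ x ^ 2 := by nlinarith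

lemma logb_two_le (x L : ℝ) (hx : 1 ≤ x) (hL : Real.log x ≤ L) : Real.logb 2 x ≤ 2 * L := by
  have h0 : 0 ≤ Real.log x := Real.log_nonneg hx
  rw [Real.logb, div_le_iff₀ (Real.log_pos one_lt_two)]
  nlinarith [Real.log_two_gt_d9]

lemma gap_bound (u v G : ℝ) (hu : 1 ≤ u) (huv : u ≤ v) (hG : 2 ≤ G)
    (h : 1/u - 1/v < 4 / (16 * G * v ^ 2)) : v - u < 1/(4*G) := by
  have hv : 1 ≤ v := le_trans hu huv
  have hu0 : (0:ℝ) < u := by linarith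
  have hv0 : (0:ℝ) < v := by linarith
  have e : v - u = (1/u - 1/v) * (u*v) := by field_simp
  rw [e]
  have huv0 : (0:ℝ) < u * v := mul_pos hu0 hv0
  have h2 : (1/u - 1/v) * (u*v) < (4/(16*G*v^2)) * (u*v) :=
    mul_lt_mul_of_pos_right h huv0
  have h3 : (4/(16*G*v^2)) * (u*v) ≤ 1/(4*G) := by
    rw [div_mul_eq_mul_div, div_le_div_iff₀ (by nlinarith) (by nlinarith)]
    nlinarith [mul_nonneg (mul_nonneg (show (0:ℝ) ≤ 16*G by linarith)
      (show (0:ℝ) ≤ v by linarith)) (show (0:ℝ) ≤ v - u by linarith)]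
  linarith

lemma exp_small_bounds (t : ℝ) (h0 : 0 ≤ t) (h1 : t ≤ 1/8) :
    Real.exp t ≤ 2 ∧ Real.exp t - 1 ≤ 2 * t := by
  have h2 : 1 - t ≤ (Real.exp t)⁻¹ := by
    rw [← Real.exp_neg]; linarith [Real.add_one_le_exp (-t)]
  have h3 : (1 - t) * Real.exp t ≤ 1 := by
    have h := mul_le_mul_of_nonneg_right h2 (Real.exp_pos t).le
    rwa [inv_mul_cancel₀ (Real.exp_pos t).ne'] at h
  have h4 : Real.exp t ≤ 2 := by
    have h5 := mul_le_mul_of_nonneg_right (show (7:ℝ)/8 ≤ 1 - t by linarith) (Real.exp_pos t).le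
    nlinarith [Real.exp_pos t]
  refine ⟨h4, ?_⟩
  have h6 := mul_le_mul_of_nonneg_left h4 h0
  nlinarith

lemma arith_base2 (p G x : ℝ) (hp : 3 ≤ p) (hG : 2 ≤ G) (hx : x ≤ 35 * p * G) :
    4 * x + 64 * p ^ 2 ≤ 180 * p ^ 2 * G := by
  have h1 : (0:ℝ) ≤ 32 * p ^ 2 * (G - 2) := by
    have : (0:ℝ) ≤ p ^ 2 := sq_nonneg p
    nlinarith
  have h2 : (0:ℝ) ≤ (p * G) * (148 * p - 140) := by
    have : (0:ℝ) ≤ p * G := by nlinarith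
    nlinarith
  nlinarith

lemma arith_L2 (p G x y : ℝ) (hp : 3 ≤ p) (hG : 2 ≤ G) (hx : x ≤ 35 * p * G)
    (hy : y ≤ 180 * p ^ 2 * G - 1) : x + p * y ≤ 215 * p ^ 3 * G := by
  have h1 : p * y ≤ p * (180 * p ^ 2 * G - 1) :=
    mul_le_mul_of_nonneg_left hy (by linarith)
  have hpG : (0:ℝ) ≤ p * G := by nlinarith
  have hp2 : (0:ℝ) ≤ p ^ 2 - 1 := by nlinarith
  have h2 : (0:ℝ) ≤ (35 * p * G) * (p ^ 2 - 1) := by nlinarith [mul_nonneg hpG hp2]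
  nlinarith

lemma arith_theta (p G y th : ℝ) (hp : 3 ≤ p) (hG : 2 ≤ G) (hth0 : 0 ≤ th)
    (hth : th ≤ 1/(2*G)) (hy0 : 0 ≤ y) (hy : y ≤ 215 * p ^ 3 * G) :
    th * y ≤ 110 * p ^ 3 := by
  have hG0 : (0:ℝ) < G := by linarith
  have h1 : th * y ≤ (1/(2*G)) * (215 * p ^ 3 * G) :=
    mul_le_mul hth hy hy0 (by positivity)
  have h2 : (1/(2*G)) * (215 * p ^ 3 * G) = 215 * p ^ 3 / 2 := by
    field_simp
  nlinarith [pow_nonneg (show (0:ℝ) ≤ p by linarith) 3]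

lemma arith_GT (p G T : ℝ) (hG0 : 0 ≤ G) (hGT : G ≤ 2 * T) :
    11520 * p ^ 2 * G ^ 2 ≤ 46080 * p ^ 2 * T ^ 2 := by
  have h1 : (0:ℝ) ≤ 4 * T ^ 2 - G ^ 2 := by nlinarith
  nlinarith [mul_nonneg (sq_nonneg p) h1]

set_option maxHeartbeats 2000000 in
theorem stmt0 (ρ : ℝ) (hρ : 1 ≤ ρ) :
    ∃ Cst : ℝ, ∀ (V : Type) [MetricSpace V] (k : ℕ) (z s : ℝ),
      1 ≤ k → 1 ≤ z → 2 ≤ s →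
      (∀ (X : WSet V) (ε : ℝ), 0 < ε → ε < 1/4 →
        ∃ D : WSet V, IsCoreset k z ε X D ∧
          (D.pts.card : ℝ) ≤ s * ε ^ (-ρ) * Real.logb 2 (2 + (X.pts.card : ℝ))) →
      ∀ (X : WSet V) (ε : ℝ), 0 < ε → ε < 1/4 →
        ∃ D : WSet V, IsCoreset k z ε X D ∧
          (D.pts.card : ℝ) ≤ Cst * (s * ε ^ (-ρ)) * (1 + Real.logb 2 (s * ε ^ (-ρ))) ^ Cst := by
  set p : ℝ := 2 * ρ + 1 with hpdef
  have hp3 : (3:ℝ) ≤ p := by simp only [hpdef]; linarith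
  have hp1 : (1:ℝ) ≤ p := by linarith
  have hρ0 : (0:ℝ) ≤ ρ := by linarith
  refine ⟨2 * Real.exp (110 * p ^ 3) * (46080 * p ^ 2) ^ p + 2 * p, ?_⟩
  intro V _inst k z s hk hz hs H X ε hεpos hε2
  set Cst : ℝ := 2 * Real.exp (110 * p ^ 3) * (46080 * p ^ 2) ^ p + 2 * p with hCstdef
  -- basic quantities
  have hεinv : (4:ℝ) ≤ ε⁻¹ := by
    rw [show (4:ℝ) = (1/4:ℝ)⁻¹ by norm_num]
    exact inv_anti₀ hεpos hε2.le
  have hrpow4 : (4:ℝ) ≤ ε ^ (-ρ) := by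
    have h1 : ε ^ (-ρ) = (ε⁻¹) ^ ρ := by
      rw [Real.rpow_neg hεpos.le, ← Real.inv_rpow hεpos.le]
    rw [h1]
    calc (4:ℝ) = 4 ^ (1:ℝ) := (Real.rpow_one 4).symm
    _ ≤ (4:ℝ) ^ ρ := Real.rpow_le_rpow_of_exponent_le (by norm_num) hρ
    _ ≤ (ε⁻¹) ^ ρ := Real.rpow_le_rpow (by norm_num) hεinv hρ0
  set B := s * ε ^ (-ρ) with hBdef
  have hB8 : (8:ℝ) ≤ B := by nlinarith
  have hBpos : (0:ℝ) < B := by linarith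
  set G := 1 + Real.log (4 + B) with hGdef
  have hG2 : (2:ℝ) ≤ G := by
    have := one_le_log4 B (by linarith)
    simp only [hGdef]; linarith
  set T := 1 + Real.logb 2 B with hTdef
  have hT1 : (1:ℝ) ≤ T := by
    have : 0 ≤ Real.logb 2 B := Real.logb_nonneg (by norm_num) (by linarith)
    simp only [hTdef]; linarith
  have hGT : G ≤ 2 * T := by
    have h4B : Real.log (4 + B) ≤ 2 * Real.log B := by
      have hB2 : (4:ℝ) + B ≤ B ^ 2 := by nlinarith
      calc Real.log (4 + B) ≤ Real.log (B ^ 2) := Real.log_le_log (by linarith) hB2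
      _ = 2 * Real.log B := by
          rw [show B ^ 2 = B * B by ring, Real.log_mul (by linarith) (by linarith)]; ring
    have hlogB : Real.log B ≤ Real.logb 2 B := by
      rw [Real.logb, le_div_iff₀ (Real.log_pos (by norm_num))]
      nlinarith [Real.log_nonneg (show (1:ℝ) ≤ B by linarith), Real.log_two_lt_d9]
    simp only [hGdef, hTdef]; linarith
  set A := B * (64 * G) ^ p with hAdef
  have h64G : (1:ℝ) ≤ 64 * G := by linarith
  have h64Gp : (1:ℝ) ≤ (64 * G) ^ p := by
    calc (1:ℝ) = 1 ^ p := (Real.one_rpow p).symm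
    _ ≤ (64 * G) ^ p := Real.rpow_le_rpow (by norm_num) h64G (by linarith)
  have hA8 : (8:ℝ) ≤ A := by nlinarith
  have hApos : (0:ℝ) < A := by linarith
  have hlogA : Real.log (4 + A) ≤ 35 * p * G := by
    have h2A : 4 + A ≤ 2 * A := by linarith
    have l1 : Real.log (4 + A) ≤ Real.log (2 * A) := Real.log_le_log (by linarith) h2A
    have l2 : Real.log (2 * A) = Real.log 2 + (Real.log B + p * Real.log (64 * G)) := by
      rw [Real.log_mul (by norm_num) (by positivity), hAdef,
        Real.log_mul (by positivity) (by positivity), Real.log_rpow (by linarith)]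
    have l3 : Real.log 2 ≤ 1 := by nlinarith [Real.log_two_lt_d9]
    have l4 : Real.log B ≤ G - 1 := by
      have := Real.log_le_log hBpos (show B ≤ 4 + B by linarith)
      simp only [hGdef]; linarith
    have l5 : Real.log (64 * G) ≤ 62 + G := by
      rw [Real.log_mul (by norm_num) (by linarith)]
      have h6 := Real.log_le_sub_one_of_pos (show (0:ℝ) < 64 by norm_num)
      have h7 := Real.log_le_sub_one_of_pos (show (0:ℝ) < G by linarith)
      linarith
    have l6 : Real.log (4 + A) ≤ G + 62 * p + p * G := by
      nlinarith [mul_le_mul_of_nonneg_left l5 (show (0:ℝ) ≤ p by linarith)]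
    nlinarith [mul_nonneg (show (0:ℝ) ≤ p - 3 by linarith) (show (0:ℝ) ≤ 34 * G - 62 by linarith)]
  set Fbd := 2 * Real.exp (110 * p ^ 3) * A * (180 * p ^ 2 * G) ^ p with hFbddef
  have hexp1 : (1:ℝ) ≤ Real.exp (110 * p ^ 3) := Real.one_le_exp (by positivity)
  have h180G : (1:ℝ) ≤ 180 * p ^ 2 * G := by nlinarith
  have h180Gp : (1:ℝ) ≤ (180 * p ^ 2 * G) ^ p := by
    calc (1:ℝ) = 1 ^ p := (Real.one_rpow p).symm
    _ ≤ (180 * p ^ 2 * G) ^ p := Real.rpow_le_rpow (by norm_num) h180G (by linarith)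
  have hFbd0 : (0:ℝ) ≤ Fbd := by positivity
  have key : ∀ n : ℕ, ∀ Y : WSet V, Y.pts.card ≤ n → ∀ η : ℝ,
      ε * (1/2 + Phi (Y.pts.card : ℝ)) ≤ η → η ≤ ε →
      ∃ D : WSet V, IsCoreset k z η Y D ∧ (D.pts.card : ℝ) ≤ Fbd := by
    intro n
    induction n with
    | zero =>
      intro Y hY η hη1 hη2
      have hη0 : 0 ≤ η :=
        le_trans (mul_nonneg hεpos.le (by linarith [phi_nonneg (Nat.cast_nonneg Y.pts.card)])) hη1
      refine ⟨Y, isCoreset_refl k z η hη0 Y, ?_⟩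
      have hc0 : Y.pts.card = 0 := Nat.le_zero.mp hY
      rw [hc0]; simpa using hFbd0
    | succ n ih =>
      intro Y hY η hη1 hη2
      set m : ℝ := (Y.pts.card : ℝ) with hmdef
      have hm0 : (0:ℝ) ≤ m := Nat.cast_nonneg _
      set L := Real.log (4 + m) with hLdef
      have hL1 : (1:ℝ) ≤ L := one_le_log4 m hm0
      have hL0 : (0:ℝ) < L := by linarith
      have hll1 : (1:ℝ) ≤ ll m := one_le_ll hm0
      have hllL : ll m ≤ L := ll_le_log hm0
      have hη0 : 0 ≤ η :=
        le_trans (mul_nonneg hεpos.le (by linarith [phi_nonneg hm0])) hη1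
      have hηhalf : ε / 2 ≤ η := by
        have h := mul_nonneg hεpos.le (phi_nonneg hm0)
        nlinarith [hη1]
      set δ := ε / (16 * G * ll m ^ 2) with hδdef
      have hll2 : (1:ℝ) ≤ ll m ^ 2 := arith_sq _ hll1
      have hden32 : (32:ℝ) ≤ 16 * G * ll m ^ 2 := by
        have h := mul_le_mul_of_nonneg_left hll2 (show (0:ℝ) ≤ 16 * G by linarith)
        nlinarith [h]
      have hden : (0:ℝ) < 16 * G * ll m ^ 2 := by linarith
      have hδpos : 0 < δ := div_pos hεpos hden
      have hδle : δ ≤ ε / 32 :=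
        div_le_div_of_nonneg_left hεpos.le (by norm_num) hden32
      have hδ14 : δ < 1/4 := by
        have : ε / 32 < 1/4 := by linarith
        linarith
      obtain ⟨D1, hD1, hD1s⟩ := H Y δ hδpos hδ14
      rw [← hmdef] at hD1s
      set m'' := s * δ ^ (-ρ) * Real.logb 2 (2 + m) with hm''def
      have hm''0 : (0:ℝ) ≤ m'' := le_trans (Nat.cast_nonneg _) hD1s
      -- bound m'' ≤ A * L ^ p
      have hlogb0 : 0 ≤ Real.logb 2 (2 + m) := Real.logb_nonneg one_lt_two (by linarith)
      have hlogb : Real.logb 2 (2 + m) ≤ 2 * L :=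
        logb_two_le (2 + m) L (by linarith) (Real.log_le_log (by linarith) (by linarith))
      have hm''A : m'' ≤ A * L ^ p := by
        have hW : 16 * G * ll m ^ 2 ≤ 16 * G * L ^ 2 :=
          mul_le_mul_of_nonneg_left (pow_le_pow_left₀ (by linarith) hllL 2) (by linarith)
        have hδinv : δ⁻¹ ≤ (16 * G * L ^ 2) * ε⁻¹ := by
          rw [hδdef, inv_div, div_eq_mul_inv]
          exact mul_le_mul_of_nonneg_right hW (inv_nonneg.mpr hεpos.le)
        have h16G0 : (0:ℝ) ≤ 16 * G := by linarith
        have h16GL0 : (0:ℝ) ≤ 16 * G * L ^ 2 := by positivity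
        have hδρ : δ ^ (-ρ) ≤ ((16 * G * L ^ 2) * ε⁻¹) ^ ρ := by
          rw [Real.rpow_neg hδpos.le, ← Real.inv_rpow hδpos.le]
          exact Real.rpow_le_rpow (inv_nonneg.mpr hδpos.le) hδinv hρ0
        have hsplit : ((16 * G * L ^ 2) * ε⁻¹) ^ ρ = (16 * G) ^ ρ * (L ^ 2) ^ ρ * ε ^ (-ρ) := by
          rw [Real.mul_rpow h16GL0 (inv_nonneg.mpr hεpos.le),
            Real.mul_rpow h16G0 (by positivity), Real.inv_rpow hεpos.le,
            ← Real.rpow_neg hεpos.le]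
        have hL2ρ : (L ^ 2) ^ ρ * (2 * L) = 2 * L ^ p := by
          rw [← Real.rpow_natCast L 2, ← Real.rpow_mul hL0.le,
            show ((2:ℕ):ℝ) * ρ = 2 * ρ by norm_num, hpdef, Real.rpow_add hL0, Real.rpow_one]
          ring
        have h2_16 : 2 * (16 * G) ^ ρ ≤ (64 * G) ^ p := by
          have e1 : (16 * G) ^ ρ ≤ (64 * G) ^ ρ :=
            Real.rpow_le_rpow h16G0 (by linarith) hρ0
          have e2 : (64 * G) ^ p = (64 * G) ^ (ρ + 1) * (64 * G) ^ ρ := by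
            rw [← Real.rpow_add (by linarith), hpdef]; ring_nf
          have e3 : (2:ℝ) ≤ (64 * G) ^ (ρ + 1) := by
            calc (2:ℝ) ≤ 64 * G := by linarith
            _ = (64 * G) ^ (1:ℝ) := (Real.rpow_one _).symm
            _ ≤ (64 * G) ^ (ρ + 1) := Real.rpow_le_rpow_of_exponent_le h64G (by linarith)
          have e4 : (0:ℝ) ≤ (64 * G) ^ ρ := Real.rpow_nonneg (by linarith) _
          calc 2 * (16 * G) ^ ρ ≤ 2 * (64 * G) ^ ρ := by linarith
          _ ≤ (64 * G) ^ (ρ + 1) * (64 * G) ^ ρ := mul_le_mul_of_nonneg_right e3 e4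
          _ = (64 * G) ^ p := e2.symm
        have hδρ0 : 0 ≤ δ ^ (-ρ) := Real.rpow_nonneg hδpos.le _
        have hs0 : (0:ℝ) ≤ s := by linarith
        have hBL0 : (0:ℝ) ≤ B * L ^ p := mul_nonneg hBpos.le (Real.rpow_nonneg hL0.le _)
        calc m'' = s * δ ^ (-ρ) * Real.logb 2 (2 + m) := hm''def
        _ ≤ s * ((16 * G) ^ ρ * (L ^ 2) ^ ρ * ε ^ (-ρ)) * (2 * L) := by
            apply mul_le_mul ?_ hlogb hlogb0 ?_
            · exact mul_le_mul_of_nonneg_left (hδρ.trans_eq hsplit) hs0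
            · have : (0:ℝ) ≤ (16 * G) ^ ρ * (L ^ 2) ^ ρ * ε ^ (-ρ) := by
                apply mul_nonneg (mul_nonneg (Real.rpow_nonneg h16G0 _)
                  (Real.rpow_nonneg (by positivity) _)) (Real.rpow_nonneg hεpos.le _)
              exact mul_nonneg hs0 this
        _ = B * ((16 * G) ^ ρ * ((L ^ 2) ^ ρ * (2 * L))) := by rw [hBdef]; ring
        _ = (2 * (16 * G) ^ ρ) * (B * L ^ p) := by rw [hL2ρ]; ring
        _ ≤ (64 * G) ^ p * (B * L ^ p) := mul_le_mul_of_nonneg_right h2_16 hBL0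
        _ = A * L ^ p := by rw [hAdef]; ring
      by_cases hc : m'' < m ∧ 2 * δ ≤ ε * (Phi m - Phi m'')
      · -- recurse
        obtain ⟨hlt, hbud⟩ := hc
        have hltn : D1.pts.card < Y.pts.card := by
          have : (D1.pts.card : ℝ) < (Y.pts.card : ℝ) := by rw [← hmdef]; linarith
          exact_mod_cast this
        have hcard : D1.pts.card ≤ n := Nat.lt_succ_iff.mp (lt_of_lt_of_le hltn hY)
        have hφ1 : Phi (D1.pts.card : ℝ) ≤ Phi m'' := phi_mono (Nat.cast_nonneg _) hD1s
        have hη'1 : ε * (1/2 + Phi (D1.pts.card : ℝ)) ≤ η - 2 * δ := by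
          have e1 : ε * (1/2 + Phi (D1.pts.card : ℝ)) ≤ ε * (1/2 + Phi m'') :=
            mul_le_mul_of_nonneg_left (by linarith) hεpos.le
          have e2 : ε * (1/2 + Phi m'') + ε * (Phi m - Phi m'') = ε * (1/2 + Phi m) := by ring
          linarith
        obtain ⟨E, hE, hEs⟩ := ih D1 hcard (η - 2 * δ) hη'1 (by linarith)
        have hη'0 : 0 ≤ η - 2 * δ :=
          le_trans (mul_nonneg hεpos.le (by linarith [phi_nonneg (Nat.cast_nonneg D1.pts.card)])) hη'1
        refine ⟨E, isCoreset_comp hD1 hE hδpos.le hη'0 ?_ (by linarith), hEs⟩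
        linarith [mul_nonneg hδpos.le (show (0:ℝ) ≤ 1 - (η - 2*δ) by linarith)]
      · -- terminal: return Y, must show m ≤ Fbd
        refine ⟨Y, isCoreset_refl k z η hη0 Y, ?_⟩
        rw [← hmdef]
        by_cases hmm : m ≤ m''
        · -- case 1 : m did not shrink
          have h1 : m ≤ A * L ^ p := le_trans hmm hm''A
          have h2 := inv_log_bound p A m hp1 (by linarith) hm0 (by rw [← hLdef]; exact h1)
          have hbase : 2 * Real.log (4 + A) + 64 * p ^ 2 ≤ 180 * p ^ 2 * G :=
            arith_base p G _ hp3 hG2 hlogA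
          have h3 : (2 * Real.log (4 + A) + 64 * p ^ 2) ^ p ≤ (180 * p ^ 2 * G) ^ p :=
            Real.rpow_le_rpow
              (by linarith [Real.log_nonneg (show (1:ℝ) ≤ 4 + A by linarith), sq_nonneg p])
              hbase (by linarith)
          calc m ≤ A * (2 * Real.log (4 + A) + 64 * p ^ 2) ^ p := h2
          _ ≤ A * (180 * p ^ 2 * G) ^ p := mul_le_mul_of_nonneg_left h3 (by linarith)
          _ ≤ Fbd := by
              have h0 : 0 ≤ A * (180 * p ^ 2 * G) ^ p := by positivity
              calc A * (180 * p ^ 2 * G) ^ p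
                  ≤ (2 * Real.exp (110 * p ^ 3)) * (A * (180 * p ^ 2 * G) ^ p) :=
                    le_mul_of_one_le_left h0 (by linarith)
              _ = Fbd := by rw [hFbddef]; ring
        · -- case 2 : shrink but budget fail
          have hlt : m'' < m := not_le.mp hmm
          have hbf : ε * (Phi m - Phi m'') < 2 * δ := by
            by_contra hcon
            exact hc ⟨hlt, not_lt.mp hcon⟩
          have hll'' : (1:ℝ) ≤ ll m'' := one_le_ll hm''0
          have hllm'' : ll m'' ≤ ll m := ll_mono hm''0 hlt.le
          have hphidiff : Phi m - Phi m'' = (1/ll m'' - 1/ll m)/2 := by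
            simp only [Phi]; ring
          have hx1 : Phi m - Phi m'' < 2 * δ / ε := by
            rw [lt_div_iff₀ hεpos]
            linarith [hbf]
          have hδε : 2 * δ / ε = 2 / (16 * G * ll m ^ 2) := by
            rw [hδdef]
            field_simp
          have hkey : 1/ll m'' - 1/ll m < 4 / (16 * G * ll m ^ 2) := by
            rw [hphidiff, hδε] at hx1
            have e : (4:ℝ)/(16 * G * ll m ^ 2) = 2 * (2/(16 * G * ll m ^ 2)) := by ring
            linarith [hx1]
          have hgap : ll m - ll m'' < 1/(4*G) := gap_bound (ll m'') (ll m) G hll'' hllm'' hG2 hkey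
          set L'' := Real.log (4 + m'') with hL''def
          have hL''1 : (1:ℝ) ≤ L'' := one_le_log4 m'' hm''0
          have hgap' : Real.log L - Real.log L'' < 1/(4*G) := by
            have e1 : ll m = 1 + Real.log L := by rw [ll_eq, ← hLdef]
            have e2 : ll m'' = 1 + Real.log L'' := by rw [ll_eq, ← hL''def]
            rw [e1, e2] at hgap
            linarith
          have hLL'' : L < Real.exp (1/(4*G)) * L'' := by
            have e3 : L = Real.exp (Real.log L) := (Real.exp_log hL0).symm
            rw [e3]
            calc Real.exp (Real.log L) < Real.exp (Real.log L'' + 1/(4*G)) :=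
              Real.exp_lt_exp.mpr (by linarith)
            _ = Real.exp (1/(4*G)) * L'' := by
                rw [Real.exp_add, Real.exp_log (by linarith)]; ring
          have ht8 : 1/(4*G) ≤ 1/8 := by
            apply div_le_div_of_nonneg_left (by norm_num) (by norm_num) (by linarith)
          have ht0 : (0:ℝ) ≤ 1/(4*G) := by positivity
          obtain ⟨hexp2, hexpθ⟩ := exp_small_bounds (1/(4*G)) ht0 ht8
          have hL2'' : L ≤ 2 * L'' := by
            have := mul_le_mul_of_nonneg_right hexp2 (show (0:ℝ) ≤ L'' by linarith)
            linarith
          have hLp1 : (1:ℝ) ≤ L ^ p := by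
            calc (1:ℝ) = 1 ^ p := (Real.one_rpow p).symm
            _ ≤ L ^ p := Real.rpow_le_rpow (by norm_num) hL1 (by linarith)
          have h45 : 4 + m'' ≤ (4 + A) * L ^ p := by
            have t1 : (4:ℝ) * 1 ≤ 4 * L ^ p :=
              mul_le_mul_of_nonneg_left hLp1 (by norm_num)
            calc 4 + m'' ≤ 4 * L ^ p + A * L ^ p := by linarith [hm''A]
            _ = (4 + A) * L ^ p := by ring
          have hL''b : L'' ≤ Real.log (4 + A) + p * Real.log L := by
            calc L'' ≤ Real.log ((4 + A) * L ^ p) := Real.log_le_log (by linarith) h45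
            _ = Real.log (4 + A) + p * Real.log L := by
                rw [Real.log_mul (by linarith) (by positivity), Real.log_rpow hL0]
          have hlogL2 : Real.log L ≤ 2 * Real.sqrt L := log_le_two_sqrt hL1
          have hq2 : L ≤ 2 * Real.log (4 + A) + (4 * p) * Real.sqrt L := by
            have t2 : p * Real.log L ≤ p * (2 * Real.sqrt L) :=
              mul_le_mul_of_nonneg_left hlogL2 (by linarith)
            linarith
          have hLstar : L ≤ 4 * Real.log (4 + A) + 64 * p ^ 2 := by
            have h := sqrt_self_bound L (2 * Real.log (4 + A)) (4 * p) (by linarith)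
              (by linarith [Real.log_nonneg (show (1:ℝ) ≤ 4 + A by linarith)]) (by linarith) hq2
            linarith [h]
          have hLstar' : L ≤ 180 * p ^ 2 * G := by
            have := arith_base2 p G (Real.log (4 + A)) hp3 hG2 hlogA
            linarith
          have hlogLstar : Real.log L ≤ 180 * p ^ 2 * G - 1 :=
            le_trans (Real.log_le_sub_one_of_pos hL0) (by linarith)
          have hL''num : L'' ≤ 215 * p ^ 3 * G := by
            have := arith_L2 p G (Real.log (4 + A)) (Real.log L) hp3 hG2 hlogA hlogLstar
            linarith
          have hθhalf : Real.exp (1/(4*G)) - 1 ≤ 1/(2*G) := by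
            have e4 : 2 * (1/(4*G)) = 1/(2*G) := by
              have hGne : (G:ℝ) ≠ 0 := by linarith
              field_simp
              ring
            linarith [hexpθ, e4.symm.le]
          have hθ0 : (0:ℝ) ≤ Real.exp (1/(4*G)) - 1 := by
            linarith [Real.add_one_le_exp (1/(4*G))]
          have hθL : (Real.exp (1/(4*G)) - 1) * L'' ≤ 110 * p ^ 3 :=
            arith_theta p G L'' (Real.exp (1/(4*G)) - 1) hp3 hG2 hθ0 hθhalf
              (by linarith) hL''num
          have hQ1 : L ^ p ≤ (180 * p ^ 2 * G) ^ p :=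
            Real.rpow_le_rpow hL0.le hLstar' (by linarith)
          have h4m'' : 4 + m'' ≤ 2 * A * (180 * p ^ 2 * G) ^ p := by
            have t3 : m'' ≤ A * (180 * p ^ 2 * G) ^ p :=
              le_trans hm''A (mul_le_mul_of_nonneg_left hQ1 (by linarith))
            have t4 : (4:ℝ) * 1 ≤ A * (180 * p ^ 2 * G) ^ p := by
              have := mul_le_mul (show (4:ℝ) ≤ A by linarith) h180Gp (by norm_num) (by linarith)
              linarith [this]
            calc 4 + m'' ≤ A * (180 * p ^ 2 * G) ^ p + A * (180 * p ^ 2 * G) ^ p := by linarith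
            _ = 2 * A * (180 * p ^ 2 * G) ^ p := by ring
          have hexpL : Real.exp L = 4 + m := Real.exp_log (by linarith)
          have e5 : Real.exp L ≤ Real.exp L'' * Real.exp ((Real.exp (1/(4*G)) - 1) * L'') := by
            rw [← Real.exp_add]
            apply Real.exp_le_exp.mpr
            linarith [hLL''.le]
          have e6 : Real.exp L'' = 4 + m'' := Real.exp_log (by linarith)
          have hQnn : (0:ℝ) ≤ 2 * A * (180 * p ^ 2 * G) ^ p :=
            mul_nonneg (by linarith)
              (Real.rpow_nonneg (show (0:ℝ) ≤ 180 * p ^ 2 * G by linarith) p)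
          calc m ≤ Real.exp L := by linarith [hexpL]
          _ ≤ Real.exp L'' * Real.exp ((Real.exp (1/(4*G)) - 1) * L'') := e5
          _ = (4 + m'') * Real.exp ((Real.exp (1/(4*G)) - 1) * L'') := by rw [e6]
          _ ≤ (2 * A * (180 * p ^ 2 * G) ^ p) * Real.exp (110 * p ^ 3) :=
              mul_le_mul h4m'' (Real.exp_le_exp.mpr hθL) (Real.exp_pos _).le hQnn
          _ = Fbd := by rw [hFbddef]; ring
  have hinit : ε * (1/2 + Phi ((X.pts.card : ℕ) : ℝ)) ≤ ε := by
    have h1 : Phi ((X.pts.card : ℕ) : ℝ) ≤ 1/2 :=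
      phi_le_half (Nat.cast_nonneg X.pts.card)
    calc ε * (1/2 + Phi ((X.pts.card : ℕ) : ℝ)) ≤ ε * 1 :=
      mul_le_mul_of_nonneg_left (by linarith) hεpos.le
    _ = ε := mul_one ε
  obtain ⟨D, hD, hDs⟩ := key X.pts.card X le_rfl ε hinit le_rfl
  refine ⟨D, hD, le_trans hDs ?_⟩
  have hT0 : (0:ℝ) ≤ T := by linarith
  have hG0 : (0:ℝ) ≤ G := by linarith
  have h1 : (0:ℝ) ≤ 64 * G := by linarith
  have h2 : (0:ℝ) ≤ 180 * p ^ 2 * G := by linarith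
  have hco : (0:ℝ) ≤ 2 * Real.exp (110 * p ^ 3) * B :=
    mul_nonneg (mul_nonneg (by norm_num) (Real.exp_pos _).le) hBpos.le
  have e1 : (64 * G) ^ p * (180 * p ^ 2 * G) ^ p = (11520 * p ^ 2 * G ^ 2) ^ p := by
    rw [← Real.mul_rpow h1 h2]
    congr 1
    ring
  have e3 : (11520 * p ^ 2 * G ^ 2) ^ p ≤ (46080 * p ^ 2 * T ^ 2) ^ p := by
    apply Real.rpow_le_rpow ?_ (arith_GT p G T hG0 hGT) (by linarith)
    have : (0:ℝ) ≤ p ^ 2 := sq_nonneg p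
    have : (0:ℝ) ≤ G ^ 2 := sq_nonneg G
    nlinarith [sq_nonneg p, sq_nonneg G, mul_nonneg (sq_nonneg p) (sq_nonneg G)]
  have e4 : (46080 * p ^ 2 * T ^ 2) ^ p = (46080 * p ^ 2) ^ p * T ^ (2 * p) := by
    rw [show (46080 * p ^ 2 * T ^ 2 : ℝ) = (46080 * p ^ 2) * T ^ 2 by ring,
      Real.mul_rpow (by positivity) (by positivity),
      ← Real.rpow_natCast T 2, ← Real.rpow_mul hT0,
      show ((2:ℕ):ℝ) * p = 2 * p by norm_num]
  have e6 : (0:ℝ) ≤ (46080 * p ^ 2) ^ p := Real.rpow_nonneg (by positivity) _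
  have e5 : T ^ (2 * p) ≤ T ^ Cst := by
    apply Real.rpow_le_rpow_of_exponent_le hT1
    have h3 : (0:ℝ) ≤ 2 * Real.exp (110 * p ^ 3) * (46080 * p ^ 2) ^ p :=
      mul_nonneg (mul_nonneg (by norm_num) (Real.exp_pos _).le) e6
    rw [hCstdef]; linarith
  have e7 : 2 * Real.exp (110 * p ^ 3) * (46080 * p ^ 2) ^ p ≤ Cst := by
    rw [hCstdef]; linarith
  calc Fbd = 2 * Real.exp (110 * p ^ 3) * B * ((64 * G) ^ p * (180 * p ^ 2 * G) ^ p) := by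
        rw [hFbddef, hAdef]; ring
  _ = 2 * Real.exp (110 * p ^ 3) * B * (11520 * p ^ 2 * G ^ 2) ^ p := by rw [e1]
  _ ≤ 2 * Real.exp (110 * p ^ 3) * B * (46080 * p ^ 2 * T ^ 2) ^ p :=
      mul_le_mul_of_nonneg_left e3 hco
  _ = 2 * Real.exp (110 * p ^ 3) * B * ((46080 * p ^ 2) ^ p * T ^ (2 * p)) := by rw [e4]
  _ ≤ 2 * Real.exp (110 * p ^ 3) * B * ((46080 * p ^ 2) ^ p * T ^ Cst) :=
      mul_le_mul_of_nonneg_left (mul_le_mul_of_nonneg_left e5 e6) hco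
  _ = (2 * Real.exp (110 * p ^ 3) * (46080 * p ^ 2) ^ p) * B * T ^ Cst := by ring
  _ ≤ Cst * B * T ^ Cst :=
      mul_le_mul_of_nonneg_right (mul_le_mul_of_nonneg_right e7 hBpos.le)
        (Real.rpow_nonneg hT0 _)
end

section
/- Let log denote the base-2 logarithm and log^{(i)} its i-th iterate (with log^{(0)} n = n). Let Γ ≥ 1 and n be reals and t ≥ 1 an integer such that log^{(t−1)} n ≥ 20·Γ. Suppose a₀, a₁, …, a_t are reals with a₀ = n, a_i ≥ 2 for all 0 ≤ i ≤ t, and a_i ≤ Γ·(log^{(i)} n)·(log a_{i−1})² for all 1 ≤ i ≤ t. Then a_i ≤ 20·Γ·(log^{(i)} n)³ for all 1 ≤ i ≤ t. -/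
/-- Iterated base-2 logarithm: `iterLog 0 n = n`, `iterLog (i+1) n = log₂ (iterLog i n)`. -/
noncomputable def iterLog : ℕ → ℝ → ℝ
  | 0, n => n
  | (i+1), n => Real.logb 2 (iterLog i n)

lemma logb_le_self_aux {x : ℝ} (hx : 20 ≤ x) : Real.logb 2 x ≤ x := by
  have hx0 : (0:ℝ) < x := by linarith
  have hs : Real.sqrt x ^ 2 = x := Real.sq_sqrt hx0.le
  have hs0 : 0 ≤ Real.sqrt x := Real.sqrt_nonneg x
  have hs4 : 4 ≤ Real.sqrt x := by nlinarith
  have hlog : Real.log (Real.sqrt x) ≤ Real.sqrt x - 1 :=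
    Real.log_le_sub_one_of_pos (by positivity)
  have hlx : Real.log x = 2 * Real.log (Real.sqrt x) := by
    rw [Real.log_sqrt hx0.le]; ring
  have hl2 : (0.6931471803 : ℝ) < Real.log 2 := Real.log_two_gt_d9
  rw [Real.logb, div_le_iff₀ (by linarith : (0:ℝ) < Real.log 2)]
  nlinarith [sq_nonneg (Real.sqrt x - 4)]

theorem stmt1 (Γ n : ℝ) (hΓ : 1 ≤ Γ) (t : ℕ) (ht : 1 ≤ t)
    (hn : 20 * Γ ≤ iterLog (t - 1) n)
    (a : ℕ → ℝ) (ha0 : a 0 = n)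
    (ha2 : ∀ i ≤ t, 2 ≤ a i)
    (hrec : ∀ i, 1 ≤ i → i ≤ t →
      a i ≤ Γ * iterLog i n * (Real.logb 2 (a (i - 1))) ^ 2) :
    ∀ i, 1 ≤ i → i ≤ t → a i ≤ 20 * Γ * (iterLog i n) ^ 3 := by
  have hΓ0 : (0:ℝ) < Γ := by linarith
  -- positivity of iterLog i n for 1 ≤ i ≤ t
  have hLpos : ∀ i, 1 ≤ i → i ≤ t → 0 < iterLog i n := by
    intro i h1 hit
    by_contra h
    push_neg at h
    have h2 := ha2 i hit
    have hr := hrec i h1 hit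
    have hsq : 0 ≤ (Real.logb 2 (a (i-1)))^2 := sq_nonneg _
    nlinarith [mul_nonneg (mul_nonneg hΓ0.le hsq) (neg_nonneg.mpr h)]
  -- downward induction: 20Γ ≤ iterLog i n for 1 ≤ i ≤ t-1
  have hC : ∀ d i, i + d = t - 1 → 1 ≤ i → 20 * Γ ≤ iterLog i n := by
    intro d
    induction d with
    | zero =>
      intro i h h1
      have : i = t - 1 := by omega
      rw [this]; exact hn
    | succ d ih =>
      intro i h h1
      have hi1 : 20 * Γ ≤ iterLog (i+1) n := ih (i+1) (by omega) (by omega)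
      have hpos : 0 < iterLog i n := hLpos i h1 (by omega)
      have h20 : (0:ℝ) < 20 * Γ := by linarith
      have hA : Real.logb 2 (20 * Γ) ≤ 20 * Γ := logb_le_self_aux (by linarith)
      have key : (20 * Γ) = (2:ℝ) ^ Real.logb 2 (20*Γ) :=
        (Real.rpow_logb two_pos (by norm_num) h20).symm
      have key2 : iterLog i n = (2:ℝ) ^ Real.logb 2 (iterLog i n) :=
        (Real.rpow_logb two_pos (by norm_num) hpos).symm
      have hmono : (2:ℝ) ^ Real.logb 2 (20*Γ) ≤ (2:ℝ) ^ Real.logb 2 (iterLog i n) := by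
        apply Real.rpow_le_rpow_left_iff (by norm_num : (1:ℝ) < 2) |>.mpr
        show Real.logb 2 (20*Γ) ≤ iterLog (i+1) n
        linarith
      linarith [key ▸ key2 ▸ hmono]
  -- logb 2 (20Γ) ≤ iterLog i n for 2 ≤ i ≤ t
  have hLt : ∀ i, 2 ≤ i → i ≤ t → Real.logb 2 (20*Γ) ≤ iterLog i n := by
    intro i h2 hit
    have hprev : 20 * Γ ≤ iterLog (i-1) n := hC (t - 1 - (i-1)) (i-1) (by omega) (by omega)
    have hpos : (0:ℝ) < 20 * Γ := by linarith
    have : Real.logb 2 (20*Γ) ≤ Real.logb 2 (iterLog (i-1) n) :=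
      Real.logb_le_logb_of_le (by norm_num) hpos hprev
    have hi : i = (i-1) + 1 := by omega
    rw [hi]
    exact this
  -- main induction
  intro i hi1
  induction i, hi1 using Nat.le_induction with
  | base =>
    intro hit
    have hr := hrec 1 le_rfl hit
    have hL1 : iterLog 1 n = Real.logb 2 n := rfl
    rw [show (1:ℕ) - 1 = 0 from rfl, ha0] at hr
    have hpos : 0 < iterLog 1 n := hLpos 1 le_rfl hit
    rw [hL1] at hpos hr ⊢
    nlinarith [mul_pos hΓ0 (pow_pos hpos 3)]
  | succ i hi ih =>
    intro hit
    have hIH : a i ≤ 20 * Γ * (iterLog i n)^3 := ih (by omega)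
    have hai2 : 2 ≤ a i := ha2 i (by omega)
    have hai0 : 0 < a i := by linarith
    have hLipos : 0 < iterLog i n := hLpos i hi (by omega)
    have hLi1pos : 0 < iterLog (i+1) n := hLpos (i+1) (by omega) hit
    have hlogai1 : 1 ≤ Real.logb 2 (a i) := by
      have := Real.logb_le_logb_of_le (by norm_num : (1:ℝ) < 2) (by norm_num : (0:ℝ) < 2) hai2
      simpa using this
    -- logb 2 (a i) ≤ 4 * iterLog (i+1) n
    have hsplit : Real.logb 2 (20 * Γ * (iterLog i n)^3)
        = Real.logb 2 (20*Γ) + 3 * iterLog (i+1) n := by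
      rw [Real.logb_mul (by positivity) (by positivity), Real.logb_pow]
      norm_num
      rfl
    have hbound : Real.logb 2 (a i) ≤ 4 * iterLog (i+1) n := by
      have h1 : Real.logb 2 (a i) ≤ Real.logb 2 (20 * Γ * (iterLog i n)^3) :=
        Real.logb_le_logb_of_le (by norm_num) hai0 hIH
      have h2 : Real.logb 2 (20*Γ) ≤ iterLog (i+1) n := hLt (i+1) (by omega) hit
      rw [hsplit] at h1
      linarith
    have hr := hrec (i+1) (by omega) hit
    rw [show (i+1) - 1 = i from rfl] at hr
    have hsq : (Real.logb 2 (a i))^2 ≤ 16 * (iterLog (i+1) n)^2 := by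
      nlinarith
    calc a (i+1) ≤ Γ * iterLog (i+1) n * (Real.logb 2 (a i))^2 := hr
      _ ≤ Γ * iterLog (i+1) n * (16 * (iterLog (i+1) n)^2) := by
          apply mul_le_mul_of_nonneg_left hsq (by positivity)
      _ ≤ 20 * Γ * (iterLog (i+1) n)^3 := by
          nlinarith [mul_pos hΓ0 (pow_pos hLi1pos 3)]
end

section
/- Fix a real z ≥ 1, an integer k ≥ 1, reals α, β ≥ 1, a metric space (V,d), and a weighted set X in V. Let C* ⊆ V be an (α,β)-approximate solution for (k,z)-clustering on X with cost_z(X,C*) > 0. Fix a map μ : X → C* with d(x,μ(x)) = d(x,C*) for every x ∈ X, and for x ∈ X put W(x) := Σ_{x'∈X : μ(x')=μ(x)} w_X(x'). Define σ̃_x := w_X(x)·( d(x,C*)^z / cost_z(X,C*) + 1/W(x) ). Then: (i) Σ_{x∈X} σ̃_x ≤ 1 + α·k; and (ii) for every x ∈ X and every nonempty C ⊆ V with |C| ≤ k and cost_z(X,C) > 0, w_X(x)·d(x,C)^z / cost_z(X,C) ≤ (β+1)·2^{2z−2}·σ̃_x. -/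
open Finset

/-- `Cs` is an `(α,β)`-approximate solution for `(k,z)`-clustering on `X`. -/
def IsApprox {V : Type*} [MetricSpace V] (k : ℕ) (z α β : ℝ) (X : WSet V)
    (Cs : Finset V) : Prop :=
  Cs.Nonempty ∧ (Cs.card : ℝ) ≤ α * k ∧
  ∀ C : Finset V, C.Nonempty → C.card ≤ k → costz z X Cs ≤ β * costz z X C

lemma rpow_add_le_aux (a b z : ℝ) (ha : 0 ≤ a) (hb : 0 ≤ b) (hz : 1 ≤ z) :
    (a + b) ^ z ≤ 2 ^ (z - 1) * (a ^ z + b ^ z) := by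
  have h := NNReal.coe_le_coe.mpr
    (NNReal.rpow_add_le_mul_rpow_add_rpow a.toNNReal b.toNNReal hz)
  simp only [NNReal.coe_rpow, NNReal.coe_add, NNReal.coe_mul,
    Real.coe_toNNReal _ ha, Real.coe_toNNReal _ hb, NNReal.coe_ofNat] at h
  exact h

theorem stmt5 {V : Type*} [MetricSpace V] [DecidableEq V]
    (z : ℝ) (hz : 1 ≤ z) (k : ℕ) (hk : 1 ≤ k)
    (α β : ℝ) (hα : 1 ≤ α) (hβ : 1 ≤ β)
    (X : WSet V) (Cs : Finset V) (happrox : IsApprox k z α β X Cs)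
    (hcost : 0 < costz z X Cs)
    (μ : V → V) (hμmem : ∀ x ∈ X.pts, μ x ∈ Cs)
    (hμ : ∀ x ∈ X.pts, dist x (μ x) = Metric.infDist x (Cs : Set V))
    (W : V → ℝ)
    (hW : ∀ x ∈ X.pts, W x = ∑ x' ∈ X.pts.filter (fun x' => μ x' = μ x), X.w x')
    (σ : V → ℝ)
    (hσ : ∀ x ∈ X.pts, σ x =
      X.w x * (Metric.infDist x (Cs : Set V) ^ z / costz z X Cs + 1 / W x)) :
    (∑ x ∈ X.pts, σ x) ≤ 1 + α * k ∧
    ∀ x ∈ X.pts, ∀ C : Finset V, C.Nonempty → C.card ≤ k → 0 < costz z X C →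
      X.w x * Metric.infDist x (C : Set V) ^ z / costz z X C ≤
        (β + 1) * (2 : ℝ) ^ (2 * z - 2) * σ x := by
  obtain ⟨hCsne, hCscard, hCsapprox⟩ := happrox
  have hwpos := X.pos
  have hz0 : (0:ℝ) ≤ z := by linarith
  have hWpos : ∀ x ∈ X.pts, 0 < W x := by
    intro x hx
    rw [hW x hx]
    exact Finset.sum_pos' (fun i hi => (hwpos i (Finset.mem_filter.mp hi).1).le)
      ⟨x, Finset.mem_filter.mpr ⟨hx, rfl⟩, hwpos x hx⟩
  have hfib : ∑ x ∈ X.pts, X.w x / W x = ((X.pts.image μ).card : ℝ) := by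
    rw [← Finset.sum_fiberwise_of_maps_to
      (fun x hx => Finset.mem_image_of_mem μ hx) (fun x => X.w x / W x)]
    have key : ∀ c ∈ X.pts.image μ,
        (∑ x ∈ X.pts.filter fun x => μ x = c, X.w x / W x) = 1 := by
      intro c hc
      obtain ⟨x0, hx0, hx0c⟩ := Finset.mem_image.mp hc
      have hS : 0 < ∑ x' ∈ X.pts.filter (fun x' => μ x' = c), X.w x' :=
        Finset.sum_pos' (fun i hi => (hwpos i (Finset.mem_filter.mp hi).1).le)
          ⟨x0, Finset.mem_filter.mpr ⟨hx0, hx0c⟩, hwpos x0 hx0⟩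
      have hWx : ∀ x ∈ X.pts.filter (fun x' => μ x' = c),
          X.w x / W x = X.w x / ∑ x' ∈ X.pts.filter (fun x' => μ x' = c), X.w x' := by
        intro x hxf
        obtain ⟨hxm, hxc⟩ := Finset.mem_filter.mp hxf
        rw [hW x hxm, hxc]
      rw [Finset.sum_congr rfl hWx, ← Finset.sum_div, div_self hS.ne']
    rw [Finset.sum_congr rfl key, Finset.sum_const, nsmul_eq_mul, mul_one]
  constructor
  · have h1 : ∑ x ∈ X.pts, σ x =
        (∑ x ∈ X.pts, X.w x * Metric.infDist x (Cs:Set V) ^ z) / costz z X Cs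
          + ∑ x ∈ X.pts, X.w x / W x := by
      rw [Finset.sum_div, ← Finset.sum_add_distrib]
      refine Finset.sum_congr rfl fun x hx => ?_
      rw [hσ x hx]; ring
    have h2 : (∑ x ∈ X.pts, X.w x * Metric.infDist x (Cs:Set V) ^ z) = costz z X Cs := rfl
    rw [h1, h2, div_self hcost.ne', hfib]
    have hcard : ((X.pts.image μ).card : ℝ) ≤ (Cs.card : ℝ) :=
      Nat.cast_le.mpr (Finset.card_le_card (fun c hc => by
        obtain ⟨x, hx, rfl⟩ := Finset.mem_image.mp hc; exact hμmem x hx))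
    linarith [hcard.trans hCscard]
  · intro x hx C hCne hCcard hCpos
    set E : ℝ := (2:ℝ) ^ (z - 1) with hEdef
    have hE0 : (0:ℝ) ≤ E := Real.rpow_nonneg (by norm_num) _
    have hE1 : (1:ℝ) ≤ E := Real.one_le_rpow one_le_two (by linarith)
    have hE2 : (2:ℝ) ^ (2 * z - 2) = E * E := by
      rw [hEdef, ← Real.rpow_add two_pos]; ring_nf
    set D := Metric.infDist x (C : Set V) with hDdef
    set Dx := Metric.infDist x (Cs : Set V) with hDxdef
    set Dc := Metric.infDist (μ x) (C : Set V) with hDcdef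
    have hDx0 : 0 ≤ Dx := Metric.infDist_nonneg
    have hDc0 : 0 ≤ Dc := Metric.infDist_nonneg
    have hD0 : 0 ≤ D := Metric.infDist_nonneg
    have htri : D ≤ Dx + Dc := by
      have h := Metric.infDist_le_infDist_add_dist (x := x) (y := μ x) (s := (C : Set V))
      rw [hμ x hx] at h
      rw [hDdef, hDxdef, hDcdef]; linarith
    have hpow : D ^ z ≤ E * (Dx ^ z + Dc ^ z) :=
      (Real.rpow_le_rpow hD0 htri hz0).trans (rpow_add_le_aux Dx Dc z hDx0 hDc0 hz)
    have hclu : W x * Dc ^ z ≤ E * (costz z X Cs + costz z X C) := by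
      rw [hW x hx, Finset.sum_mul]
      have hbound : ∀ x' ∈ X.pts.filter (fun x' => μ x' = μ x),
          X.w x' * Dc ^ z ≤ E * (X.w x' * Metric.infDist x' (Cs:Set V) ^ z
            + X.w x' * Metric.infDist x' (C:Set V) ^ z) := by
        intro x' hx'f
        obtain ⟨hx', hx'c⟩ := Finset.mem_filter.mp hx'f
        have h2 := Metric.infDist_le_infDist_add_dist (x := μ x) (y := x') (s := (C : Set V))
        have h3 : dist (μ x) x' = Metric.infDist x' (Cs:Set V) := by
          rw [dist_comm, ← hx'c]; exact hμ x' hx'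
        rw [h3] at h2
        have h1 : Dc ≤ Metric.infDist x' (Cs:Set V) + Metric.infDist x' (C:Set V) := by
          rw [hDcdef]; linarith
        have h4 : Dc ^ z ≤ E * (Metric.infDist x' (Cs:Set V) ^ z
            + Metric.infDist x' (C:Set V) ^ z) :=
          (Real.rpow_le_rpow hDc0 h1 hz0).trans
            (rpow_add_le_aux _ _ z Metric.infDist_nonneg Metric.infDist_nonneg hz)
        calc X.w x' * Dc ^ z
            ≤ X.w x' * (E * (Metric.infDist x' (Cs:Set V) ^ z
              + Metric.infDist x' (C:Set V) ^ z)) :=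
              mul_le_mul_of_nonneg_left h4 (hwpos x' hx').le
          _ = E * (X.w x' * Metric.infDist x' (Cs:Set V) ^ z
              + X.w x' * Metric.infDist x' (C:Set V) ^ z) := by ring
      refine (Finset.sum_le_sum hbound).trans ?_
      rw [← Finset.mul_sum, Finset.sum_add_distrib]
      have hA : ∑ x' ∈ X.pts.filter (fun x' => μ x' = μ x),
          X.w x' * Metric.infDist x' (Cs:Set V) ^ z ≤ costz z X Cs :=
        Finset.sum_le_sum_of_subset_of_nonneg (Finset.filter_subset _ _)
          (fun i hi _ => mul_nonneg (hwpos i hi).le (Real.rpow_nonneg Metric.infDist_nonneg z))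
      have hB : ∑ x' ∈ X.pts.filter (fun x' => μ x' = μ x),
          X.w x' * Metric.infDist x' (C:Set V) ^ z ≤ costz z X C :=
        Finset.sum_le_sum_of_subset_of_nonneg (Finset.filter_subset _ _)
          (fun i hi _ => mul_nonneg (hwpos i hi).le (Real.rpow_nonneg Metric.infDist_nonneg z))
      have := add_le_add hA hB
      nlinarith [this, hE0]
    have hβc : costz z X Cs ≤ β * costz z X C := hCsapprox C hCne hCcard
    have hWx := hWpos x hx
    have hwx := hwpos x hx
    have hDc2 : Dc ^ z ≤ E * (β + 1) * costz z X C / W x := by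
      rw [le_div_iff₀ hWx]
      calc Dc ^ z * W x = W x * Dc ^ z := mul_comm _ _
        _ ≤ E * (costz z X Cs + costz z X C) := hclu
        _ ≤ E * ((β + 1) * costz z X C) :=
            mul_le_mul_of_nonneg_left (by linarith) hE0
        _ = E * (β + 1) * costz z X C := by ring
    have piece1 : X.w x * Dx ^ z / costz z X C ≤ β * X.w x * Dx ^ z / costz z X Cs := by
      rw [div_le_div_iff₀ hCpos hcost]
      have hnn : 0 ≤ X.w x * Dx ^ z := mul_nonneg hwx.le (Real.rpow_nonneg hDx0 z)
      nlinarith [mul_le_mul_of_nonneg_left hβc hnn]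
    have hσx := hσ x hx
    have hcC : costz z X C ≠ 0 := ne_of_gt hCpos
    have t1 : X.w x * D ^ z / costz z X C
        ≤ X.w x * (E * (Dx ^ z + Dc ^ z)) / costz z X C := by
      gcongr
    have t2 : X.w x * (E * (Dx ^ z + Dc ^ z)) / costz z X C
        = E * (X.w x * Dx ^ z / costz z X C) + E * (X.w x * Dc ^ z / costz z X C) := by
      ring
    have t3 : X.w x * Dc ^ z / costz z X C
        ≤ X.w x * (E * (β + 1) * costz z X C / W x) / costz z X C := by
      gcongr
    have t4 : X.w x * (E * (β + 1) * costz z X C / W x) / costz z X C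
        = E * (β + 1) * (X.w x * (1 / W x)) := by
      have h5 : E * (β + 1) * costz z X C / W x
          = (E * (β + 1) * (1 / W x)) * costz z X C := by ring
      rw [h5, ← mul_assoc, mul_div_assoc, div_self hcC, mul_one]; ring
    have hp1 := mul_le_mul_of_nonneg_left piece1 hE0
    have hp2 := mul_le_mul_of_nonneg_left (t3.trans_eq t4) hE0
    have hA0 : 0 ≤ X.w x * Dx ^ z / costz z X Cs :=
      div_nonneg (mul_nonneg hwx.le (Real.rpow_nonneg hDx0 z)) hcost.le
    have hB0 : 0 ≤ X.w x * (1 / W x) := mul_nonneg hwx.le (by positivity)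
    have hEE : E * β ≤ E * E * (β + 1) := by
      have h1 : 0 ≤ E * (E - 1) * (β + 1) :=
        mul_nonneg (mul_nonneg hE0 (by linarith)) (by linarith)
      linarith [h1, hE0]
    have hq := mul_le_mul_of_nonneg_right hEE hA0
    rw [hσx, hE2, ← hDxdef]
    calc X.w x * D ^ z / costz z X C
        ≤ E * (β * X.w x * Dx ^ z / costz z X Cs)
            + E * (E * (β + 1) * (X.w x * (1 / W x))) :=
          (t1.trans t2.le).trans (add_le_add hp1 hp2)
      _ ≤ E * E * (β + 1) * (X.w x * Dx ^ z / costz z X Cs)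
            + E * (E * (β + 1) * (X.w x * (1 / W x))) := by
          refine add_le_add ?_ le_rfl
          calc E * (β * X.w x * Dx ^ z / costz z X Cs)
              = E * β * (X.w x * Dx ^ z / costz z X Cs) := by ring
            _ ≤ _ := hq
      _ = (β + 1) * (E * E) * (X.w x * (Dx ^ z / costz z X Cs + 1 / W x)) := by ring
end

section
/- Let (V,d) be a metric space, k ≥ 1 an integer, α, β ≥ 1 and ε > 0 reals, X a weighted set in V, and let C* be an (α,β)-approximate solution for (k,1)-clustering (k-Median) on X. Suppose (f_x)_{x∈X} is a family of functions f_x : V → ℝ satisfying d(x,c) ≤ f_x(c) ≤ (1+ε)·d(x,c) + ε·d(x,C*) for all x ∈ X and c ∈ V. Then for every nonempty C ⊆ V with |C| ≤ k, cost(X,C) ≤ Σ_{x∈X} w_X(x)·min_{c∈C} f_x(c) ≤ (1 + (β+1)·ε)·cost(X,C). -/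
open Finset

/-- The k-Median cost `cost(X, C) = Σ_{x ∈ X} w_X(x) · d(x, C)`. -/
noncomputable def cost1 {V : Type*} [MetricSpace V] (X : WSet V) (C : Finset V) : ℝ :=
  ∑ x ∈ X.pts, X.w x * Metric.infDist x (C : Set V)

/-- `Cs` is an `(α,β)`-approximate solution for `(k,1)`-clustering (k-Median) on `X`. -/
def IsApprox1 {V : Type*} [MetricSpace V] (k : ℕ) (α β : ℝ) (X : WSet V)
    (Cs : Finset V) : Prop :=
  Cs.Nonempty ∧ (Cs.card : ℝ) ≤ α * k ∧
  ∀ C : Finset V, C.Nonempty → C.card ≤ k → cost1 X Cs ≤ β * cost1 X C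

theorem stmt7 {V : Type*} [MetricSpace V] (k : ℕ) (hk : 1 ≤ k)
    (α β ε : ℝ) (hα : 1 ≤ α) (hβ : 1 ≤ β) (hε : 0 < ε)
    (X : WSet V) (Cs : Finset V) (happrox : IsApprox1 k α β X Cs)
    (f : V → V → ℝ)
    (hf : ∀ x ∈ X.pts, ∀ c : V,
      dist x c ≤ f x c ∧ f x c ≤ (1 + ε) * dist x c + ε * Metric.infDist x (Cs : Set V)) :
    ∀ (C : Finset V) (hC : C.Nonempty), C.card ≤ k →
      cost1 X C ≤ (∑ x ∈ X.pts, X.w x * C.inf' hC (f x)) ∧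
      (∑ x ∈ X.pts, X.w x * C.inf' hC (f x)) ≤ (1 + (β + 1) * ε) * cost1 X C := by
  intro C hC hCk
  have hinfC : ∀ x : V, Metric.infDist x (C : Set V) = C.inf' hC (fun c => dist x c) := by
    intro x
    obtain ⟨c, hc, hmin⟩ := C.exists_min_image (fun c => dist x c) hC
    have h1 : Metric.infDist x (C : Set V) ≤ dist x c :=
      Metric.infDist_le_dist_of_mem (by exact_mod_cast hc)
    have h2 : dist x c ≤ Metric.infDist x (C : Set V) := by
      by_contra h
      push_neg at h
      obtain ⟨y, hy, hlt⟩ := (Metric.infDist_lt_iff (by exact_mod_cast hC)).1 h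
      exact absurd (hmin y (by exact_mod_cast hy)) (not_le.2 hlt)
    have heq : Metric.infDist x (C : Set V) = dist x c := le_antisymm h1 h2
    rw [heq]
    apply le_antisymm
    · exact Finset.le_inf' _ _ (fun y hy => hmin y hy)
    · exact Finset.inf'_le _ hc
  constructor
  · unfold cost1
    apply Finset.sum_le_sum
    intro x hx
    have hw := (X.pos x hx).le
    apply mul_le_mul_of_nonneg_left _ hw
    rw [hinfC]
    apply Finset.le_inf'
    intro c hc
    exact le_trans (Finset.inf'_le _ hc) (hf x hx c).1
  · have hcost : ∑ x ∈ X.pts, X.w x * C.inf' hC (f x)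
        ≤ (1 + ε) * cost1 X C + ε * cost1 X Cs := by
      unfold cost1
      rw [Finset.mul_sum, Finset.mul_sum, ← Finset.sum_add_distrib]
      apply Finset.sum_le_sum
      intro x hx
      have hw := (X.pos x hx).le
      obtain ⟨c, hc, hmin⟩ := C.exists_min_image (fun c => dist x c) hC
      have hdc : Metric.infDist x (C : Set V) = dist x c := by
        rw [hinfC]
        exact le_antisymm (Finset.inf'_le _ hc) (Finset.le_inf' _ _ hmin)
      have h1 : C.inf' hC (f x) ≤ f x c := Finset.inf'_le _ hc
      have h2 := (hf x hx c).2
      calc X.w x * C.inf' hC (f x)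
          ≤ X.w x * ((1 + ε) * dist x c + ε * Metric.infDist x (Cs : Set V)) :=
            mul_le_mul_of_nonneg_left (h1.trans h2) hw
        _ = (1 + ε) * (X.w x * Metric.infDist x (C : Set V))
            + ε * (X.w x * Metric.infDist x (Cs : Set V)) := by rw [hdc]; ring
    have hβc := happrox.2.2 C hC hCk
    have hcost0 : 0 ≤ cost1 X C := by
      apply Finset.sum_nonneg
      intro x hx
      exact mul_nonneg (X.pos x hx).le Metric.infDist_nonneg
    calc ∑ x ∈ X.pts, X.w x * C.inf' hC (f x)
        ≤ (1 + ε) * cost1 X C + ε * cost1 X Cs := hcost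
      _ ≤ (1 + ε) * cost1 X C + ε * (β * cost1 X C) :=
          add_le_add le_rfl (mul_le_mul_of_nonneg_left hβc hε.le)
      _ = (1 + (β + 1) * ε) * cost1 X C := by ring
end

section
/- Let (V,d) be a metric space, k ≥ 1 an integer, α, β ≥ 1 reals, ε ∈ (0,1/2), X a weighted set in V, and let C* be an (α,β)-approximate solution for (k,1)-clustering (k-Median) on X. Suppose (f_x)_{x∈X} satisfies d(x,c) ≤ f_x(c) ≤ (1+ε)·d(x,c) + ε·d(x,C*) for all x ∈ X, c ∈ V, and write F(C) := Σ_{x∈X} w_X(x)·min_{c∈C} f_x(c). Let D be a weighted set with D ⊆ X and weights w_D such that: (a) for every nonempty C ⊆ V with |C| ≤ k, (1−ε)·F(C) ≤ Σ_{x∈D} w_D(x)·min_{c∈C} f_x(c) ≤ (1+ε)·F(C); and (b) Σ_{x∈D} w_D(x)·d(x,C*) ≤ 2·cost(X,C*). Then for every nonempty C ⊆ V with |C| ≤ k, (1 − 10·β·ε)·cost(X,C) ≤ cost(D,C) ≤ (1 + 10·β·ε)·cost(X,C). -/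
open Finset

theorem stmt8 {V : Type*} [MetricSpace V] (k : ℕ) (hk : 1 ≤ k)
    (α β ε : ℝ) (hα : 1 ≤ α) (hβ : 1 ≤ β) (hε0 : 0 < ε) (hε1 : ε < 1/2)
    (X : WSet V) (Cs : Finset V) (happrox : IsApprox1 k α β X Cs)
    (f : V → V → ℝ)
    (hf : ∀ x ∈ X.pts, ∀ c : V,
      dist x c ≤ f x c ∧ f x c ≤ (1 + ε) * dist x c + ε * Metric.infDist x (Cs : Set V))
    (D : WSet V) (hDX : D.pts ⊆ X.pts)
    (ha : ∀ (C : Finset V) (hC : C.Nonempty), C.card ≤ k →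
      (1 - ε) * (∑ x ∈ X.pts, X.w x * C.inf' hC (f x)) ≤
        (∑ x ∈ D.pts, D.w x * C.inf' hC (f x)) ∧
      (∑ x ∈ D.pts, D.w x * C.inf' hC (f x)) ≤
        (1 + ε) * (∑ x ∈ X.pts, X.w x * C.inf' hC (f x)))
    (hb : (∑ x ∈ D.pts, D.w x * Metric.infDist x (Cs : Set V)) ≤ 2 * cost1 X Cs) :
    ∀ C : Finset V, C.Nonempty → C.card ≤ k →
      (1 - 10 * β * ε) * cost1 X C ≤ cost1 D C ∧
      cost1 D C ≤ (1 + 10 * β * ε) * cost1 X C := by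
  intro C hC hCk
  obtain ⟨hG1, hG2⟩ := ha C hC hCk
  obtain ⟨hCs, _, happ⟩ := happrox
  have happC := happ C hC hCk
  -- pointwise bounds
  have hA : ∀ x ∈ X.pts, Metric.infDist x (C : Set V) ≤ C.inf' hC (f x) := by
    intro x hx
    obtain ⟨c, hc, hceq⟩ := C.exists_mem_eq_inf' hC (f x)
    rw [hceq]
    exact le_trans (Metric.infDist_le_dist_of_mem hc) (hf x hx c).1
  have hB : ∀ x ∈ X.pts, C.inf' hC (f x) ≤
      (1 + ε) * Metric.infDist x (C : Set V) + ε * Metric.infDist x (Cs : Set V) := by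
    intro x hx
    obtain ⟨c, hc, hceq⟩ := (C.finite_toSet.isCompact).exists_infDist_eq_dist
      (by exact_mod_cast hC) x
    rw [hceq]
    exact le_trans (Finset.inf'_le _ hc) (hf x hx c).2
  -- nonnegativity of weights
  have hXw : ∀ x ∈ X.pts, 0 ≤ X.w x := fun x hx => (X.pos x hx).le
  have hDw : ∀ x ∈ D.pts, 0 ≤ D.w x := fun x hx => (D.pos x hx).le
  have hcX0 : 0 ≤ cost1 X C := Finset.sum_nonneg fun x hx =>
    mul_nonneg (hXw x hx) Metric.infDist_nonneg
  have hcD0 : 0 ≤ cost1 D C := Finset.sum_nonneg fun x hx =>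
    mul_nonneg (hDw x hx) Metric.infDist_nonneg
  -- (1) cost1 X C ≤ F
  have h1 : cost1 X C ≤ ∑ x ∈ X.pts, X.w x * C.inf' hC (f x) :=
    Finset.sum_le_sum fun x hx => mul_le_mul_of_nonneg_left (hA x hx) (hXw x hx)
  -- (2) F ≤ (1+ε) cost1 X C + ε cost1 X Cs
  have h2 : (∑ x ∈ X.pts, X.w x * C.inf' hC (f x)) ≤
      (1 + ε) * cost1 X C + ε * cost1 X Cs := by
    have := Finset.sum_le_sum fun x hx =>
      mul_le_mul_of_nonneg_left (hB x hx) (hXw x hx)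
    refine le_trans this (le_of_eq ?_)
    simp only [cost1, Finset.mul_sum, ← Finset.sum_add_distrib]
    exact Finset.sum_congr rfl fun x _ => by ring
  -- (3) cost1 D C ≤ G
  have h3 : cost1 D C ≤ ∑ x ∈ D.pts, D.w x * C.inf' hC (f x) :=
    Finset.sum_le_sum fun x hx => mul_le_mul_of_nonneg_left (hA x (hDX hx)) (hDw x hx)
  -- (4) G ≤ (1+ε) cost1 D C + ε Σ_D w dCs
  have h4 : (∑ x ∈ D.pts, D.w x * C.inf' hC (f x)) ≤
      (1 + ε) * cost1 D C + ε * (∑ x ∈ D.pts, D.w x * Metric.infDist x (Cs : Set V)) := by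
    have := Finset.sum_le_sum fun x hx =>
      mul_le_mul_of_nonneg_left (hB x (hDX hx)) (hDw x hx)
    refine le_trans this (le_of_eq ?_)
    simp only [cost1, Finset.mul_sum, ← Finset.sum_add_distrib]
    exact Finset.sum_congr rfl fun x _ => by ring
  constructor
  · -- lower bound
    -- (1-ε) cost1 X C ≤ (1-ε) F ≤ G ≤ (1+ε) cost1 D C + 2 ε β cost1 X C
    have key : (1 - ε) * cost1 X C ≤ (1 + ε) * cost1 D C + 2 * ε * (β * cost1 X C) := by
      have l1 : (1 - ε) * cost1 X C ≤ (1 - ε) * (∑ x ∈ X.pts, X.w x * C.inf' hC (f x)) :=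
        mul_le_mul_of_nonneg_left h1 (by linarith)
      have l2 : ε * (∑ x ∈ D.pts, D.w x * Metric.infDist x (Cs : Set V)) ≤
          2 * ε * (β * cost1 X C) := by
        calc ε * (∑ x ∈ D.pts, D.w x * Metric.infDist x (Cs : Set V))
            ≤ ε * (2 * cost1 X Cs) := mul_le_mul_of_nonneg_left hb hε0.le
          _ ≤ ε * (2 * (β * cost1 X C)) := by
              refine mul_le_mul_of_nonneg_left ?_ hε0.le
              linarith
          _ = 2 * ε * (β * cost1 X C) := by ring
      linarith
    have step : (1 + ε) * ((1 - 10 * β * ε) * cost1 X C) ≤ (1 + ε) * cost1 D C := by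
      nlinarith [mul_nonneg hε0.le (mul_nonneg (by linarith : (0:ℝ) ≤ β - 1) hcX0),
        mul_nonneg hε0.le hcX0,
        mul_nonneg (mul_nonneg hε0.le hε0.le) (mul_nonneg (by linarith : (0:ℝ) ≤ β) hcX0)]
    exact le_of_mul_le_mul_left step (by linarith)
  · -- upper bound
    have u1 : (∑ x ∈ X.pts, X.w x * C.inf' hC (f x)) ≤ (1 + ε + ε * β) * cost1 X C := by
      have : ε * cost1 X Cs ≤ ε * (β * cost1 X C) :=
        mul_le_mul_of_nonneg_left happC hε0.le
      linarith
    have u2 : cost1 D C ≤ (1 + ε) * ((1 + ε + ε * β) * cost1 X C) := by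
      calc cost1 D C ≤ ∑ x ∈ D.pts, D.w x * C.inf' hC (f x) := h3
        _ ≤ (1 + ε) * (∑ x ∈ X.pts, X.w x * C.inf' hC (f x)) := hG2
        _ ≤ (1 + ε) * ((1 + ε + ε * β) * cost1 X C) :=
            mul_le_mul_of_nonneg_left u1 (by linarith)
    nlinarith [mul_nonneg hε0.le (mul_nonneg (by linarith : (0:ℝ) ≤ β - 1) hcX0),
      mul_nonneg (mul_nonneg hε0.le (by linarith : (0:ℝ) ≤ 1/2 - ε)) hcX0,
      mul_nonneg (mul_nonneg (mul_nonneg hε0.le (by linarith : (0:ℝ) ≤ 1/2 - ε)) (by linarith : (0:ℝ) ≤ β)) hcX0,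
      mul_nonneg hε0.le hcX0]
end

section
/- Let (V,d) be a metric space, k ≥ 1 an integer, z ≥ 1 a real, ε ∈ (0,1/2), and X a weighted set in V. Suppose (f_x)_{x∈X} is a family of functions f_x : V → [0,∞) satisfying d(x,c) ≤ f_x(c) ≤ (1+ε)·d(x,c) for all x ∈ X and c ∈ V, and write G(C) := Σ_{x∈X} w_X(x)·(min_{c∈C} f_x(c))^z. Let D be a weighted set with D ⊆ X such that for every nonempty C ⊆ V with |C| ≤ k, (1−ε)·G(C) ≤ Σ_{x∈D} w_D(x)·(min_{c∈C} f_x(c))^z ≤ (1+ε)·G(C). Then for every nonempty C ⊆ V with |C| ≤ k, (1−ε)·(1+ε)^{−z}·cost_z(X,C) ≤ cost_z(D,C) ≤ (1+ε)^{z+1}·cost_z(X,C). -/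
open Finset

theorem stmt10 {V : Type*} [MetricSpace V] (k : ℕ) (hk : 1 ≤ k)
    (z ε : ℝ) (hz : 1 ≤ z) (hε0 : 0 < ε) (hε1 : ε < 1/2)
    (X : WSet V)
    (f : V → V → ℝ)
    (hf0 : ∀ x ∈ X.pts, ∀ c : V, 0 ≤ f x c)
    (hf : ∀ x ∈ X.pts, ∀ c : V, dist x c ≤ f x c ∧ f x c ≤ (1 + ε) * dist x c)
    (D : WSet V) (hDX : D.pts ⊆ X.pts)
    (hD : ∀ (C : Finset V) (hC : C.Nonempty), C.card ≤ k →
      (1 - ε) * (∑ x ∈ X.pts, X.w x * (C.inf' hC (f x)) ^ z) ≤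
        (∑ x ∈ D.pts, D.w x * (C.inf' hC (f x)) ^ z) ∧
      (∑ x ∈ D.pts, D.w x * (C.inf' hC (f x)) ^ z) ≤
        (1 + ε) * (∑ x ∈ X.pts, X.w x * (C.inf' hC (f x)) ^ z)) :
    ∀ C : Finset V, C.Nonempty → C.card ≤ k →
      (1 - ε) * (1 + ε) ^ (-z) * costz z X C ≤ costz z D C ∧
      costz z D C ≤ (1 + ε) ^ (z + 1) * costz z X C := by
  intro C hC hCk
  obtain ⟨h1, h2⟩ := hD C hC hCk
  have hε1' : (0:ℝ) < 1 + ε := by linarith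
  have hz0 : (0:ℝ) ≤ z := by linarith
  have hCne : (C : Set V).Nonempty := by exact_mod_cast hC
  have key : ∀ x ∈ X.pts, Metric.infDist x (C : Set V) ≤ C.inf' hC (f x) ∧
      C.inf' hC (f x) ≤ (1 + ε) * Metric.infDist x (C : Set V) := by
    intro x hx
    constructor
    · obtain ⟨c0, hc0, hgc0⟩ := C.exists_mem_eq_inf' hC (f x)
      calc Metric.infDist x (C : Set V) ≤ dist x c0 :=
              Metric.infDist_le_dist_of_mem (by exact_mod_cast hc0)
        _ ≤ f x c0 := (hf x hx c0).1
        _ = C.inf' hC (f x) := hgc0.symm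
    · obtain ⟨c0, hc0, hd0⟩ := (C.finite_toSet.isCompact).exists_infDist_eq_dist hCne x
      have hc0' : c0 ∈ C := by exact_mod_cast hc0
      calc C.inf' hC (f x) ≤ f x c0 := Finset.inf'_le _ hc0'
        _ ≤ (1 + ε) * dist x c0 := (hf x hx c0).2
        _ = (1 + ε) * Metric.infDist x (C : Set V) := by rw [hd0]
  set SX := ∑ x ∈ X.pts, X.w x * (C.inf' hC (f x)) ^ z with hSX
  set SD := ∑ x ∈ D.pts, D.w x * (C.inf' hC (f x)) ^ z with hSD
  set P := (1 + ε) ^ z with hP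
  have hPpos : 0 < P := Real.rpow_pos_of_pos hε1' z
  have hXle : costz z X C ≤ SX := by
    apply Finset.sum_le_sum
    intro x hx
    exact mul_le_mul_of_nonneg_left
      (Real.rpow_le_rpow Metric.infDist_nonneg (key x hx).1 hz0) (X.pos x hx).le
  have hDle : costz z D C ≤ SD := by
    apply Finset.sum_le_sum
    intro x hx
    exact mul_le_mul_of_nonneg_left
      (Real.rpow_le_rpow Metric.infDist_nonneg (key x (hDX hx)).1 hz0) (D.pos x hx).le
  have hg0 : ∀ x ∈ X.pts, 0 ≤ C.inf' hC (f x) := by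
    intro x hx
    exact le_trans Metric.infDist_nonneg (key x hx).1
  have hSXle : SX ≤ P * costz z X C := by
    rw [costz, Finset.mul_sum]
    apply Finset.sum_le_sum
    intro x hx
    have : (C.inf' hC (f x)) ^ z ≤ P * Metric.infDist x (C : Set V) ^ z := by
      rw [hP, ← Real.mul_rpow hε1'.le Metric.infDist_nonneg]
      exact Real.rpow_le_rpow (hg0 x hx) (key x hx).2 hz0
    calc X.w x * (C.inf' hC (f x)) ^ z
        ≤ X.w x * (P * Metric.infDist x (C : Set V) ^ z) :=
          mul_le_mul_of_nonneg_left this (X.pos x hx).le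
      _ = P * (X.w x * Metric.infDist x (C : Set V) ^ z) := by ring
  have hSDle : SD ≤ P * costz z D C := by
    rw [costz, Finset.mul_sum]
    apply Finset.sum_le_sum
    intro x hx
    have : (C.inf' hC (f x)) ^ z ≤ P * Metric.infDist x (C : Set V) ^ z := by
      rw [hP, ← Real.mul_rpow hε1'.le Metric.infDist_nonneg]
      exact Real.rpow_le_rpow (hg0 x (hDX hx)) (key x (hDX hx)).2 hz0
    calc D.w x * (C.inf' hC (f x)) ^ z
        ≤ D.w x * (P * Metric.infDist x (C : Set V) ^ z) :=
          mul_le_mul_of_nonneg_left this (D.pos x hx).le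
      _ = P * (D.w x * Metric.infDist x (C : Set V) ^ z) := by ring
  have hεm : (0:ℝ) < 1 - ε := by linarith
  constructor
  · have hchain : (1 - ε) * costz z X C ≤ P * costz z D C := by
      calc (1 - ε) * costz z X C ≤ (1 - ε) * SX :=
            mul_le_mul_of_nonneg_left hXle hεm.le
        _ ≤ SD := h1
        _ ≤ P * costz z D C := hSDle
    rw [Real.rpow_neg hε1'.le, ← hP, mul_comm (1 - ε) P⁻¹, mul_assoc,
      inv_mul_le_iff₀ hPpos]
    linarith [hchain]
  · have : costz z D C ≤ (1 + ε) * (P * costz z X C) := by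
      calc costz z D C ≤ SD := hDle
        _ ≤ (1 + ε) * SX := h2
        _ ≤ (1 + ε) * (P * costz z X C) :=
            mul_le_mul_of_nonneg_left hSXle hε1'.le
    have heq : (1 + ε) ^ (z + 1) = P * (1 + ε) := by
      rw [hP, Real.rpow_add hε1', Real.rpow_one]
    rw [heq]
    linarith [this]
end

section
/- There exists an absolute constant C such that the following holds. Let T be a finite tree (a connected acyclic simple graph) in which every vertex has degree at most 3, and let R be a subset of the vertices of T. Then there exists a partition P of the vertex set of T such that: (i) every part S ∈ P induces a connected subgraph of T; (ii) every part S ∈ P satisfies |S ∩ R| ≤ 3; (iii) for every part S ∈ P, the number of edges of T with exactly one endpoint in S is at most 4; and (iv) the number of parts satisfies |P| ≤ (|R| + 2)^C. -/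
open Finset

namespace Stmt18Aux
open SimpleGraph
open scoped Classical
set_option linter.unusedSectionVars false
set_option linter.unusedVariables false
set_option maxHeartbeats 1000000

variable {V : Type} [Fintype V] [DecidableEq V]

section
variable (T : SimpleGraph V) (r : V)

/-- distance to root -/
noncomputable def dd (v : V) : ℕ := T.dist v r

/-- parent of a vertex -/
noncomputable def par (v : V) : V :=
  if h : ∃ w, T.Adj v w ∧ dd T r w + 1 = dd T r v then h.choose else r

variable {T r}

lemma dd_r : dd T r r = 0 := SimpleGraph.dist_self

lemma dd_pos (hc : T.Connected) {v : V} (hv : v ≠ r) : 0 < dd T r v :=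
  (hc v r).pos_dist_of_ne hv

lemma exists_par (hc : T.Connected) {v : V} (hv : v ≠ r) :
    ∃ w, T.Adj v w ∧ dd T r w + 1 = dd T r v := by
  obtain ⟨p, hp, hl⟩ := hc.exists_path_of_dist v r
  have hlen : 0 < p.length := by
    rw [hl]; exact dd_pos hc hv
  have hadj : T.Adj v (p.getVert 1) := by
    have := p.adj_getVert_succ (i := 0) hlen
    simpa using this
  refine ⟨p.getVert 1, hadj, ?_⟩
  have hnil : ¬ p.Nil := SimpleGraph.Walk.not_nil_iff_lt_length.2 hlen
  have htail : p.tail.length + 1 = p.length := SimpleGraph.Walk.length_tail_add_one hnil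
  have h1 : T.dist (p.getVert 1) r ≤ p.length - 1 := by
    have := SimpleGraph.dist_le p.tail
    change T.dist (p.getVert 1) r ≤ p.tail.length at this
    omega
  have hd1 : T.dist v (p.getVert 1) = 1 := SimpleGraph.dist_eq_one_iff_adj.2 hadj
  have h2 : T.dist v r ≤ T.dist (p.getVert 1) r + 1 := by
    have := hc.dist_triangle (u := v) (v := p.getVert 1) (w := r)
    omega
  simp only [dd]
  omega

lemma par_unique (hc : T.Connected) (ha : T.IsAcyclic) {v w : V} (hadj : T.Adj v w)
    (hd : dd T r w + 1 = dd T r v) : par T r v = w := by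
  have hv : v ≠ r := by
    intro h; rw [h, dd_r] at hd; omega
  have hex : ∃ w, T.Adj v w ∧ dd T r w + 1 = dd T r v := ⟨w, hadj, hd⟩
  rw [par, dif_pos hex]
  obtain ⟨h1, h2⟩ := hex.choose_spec
  set w' := hex.choose with hw'
  -- show w' = w using acyclicity
  by_contra hne
  -- build two distinct paths v → r
  have mk : ∀ x : V, T.Adj v x → dd T r x + 1 = dd T r v →
      ∃ q : T.Walk v r, q.IsPath ∧ q.getVert 1 = x := by
    intro x hax hdx
    obtain ⟨q, hq, hql⟩ := hc.exists_path_of_dist x r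
    have hvq : v ∉ q.support := by
      intro hmem
      have := SimpleGraph.dist_le (q.dropUntil v hmem)
      have := SimpleGraph.Walk.length_dropUntil_le q hmem
      unfold dd at hdx
      omega
    refine ⟨SimpleGraph.Walk.cons hax q, hq.cons hvq, ?_⟩
    rw [SimpleGraph.Walk.getVert_cons_succ, SimpleGraph.Walk.getVert_zero]
  obtain ⟨q1, hq1, hg1⟩ := mk w' h1 h2
  obtain ⟨q2, hq2, hg2⟩ := mk w hadj hd
  have : (⟨q1, hq1⟩ : T.Path v r) = ⟨q2, hq2⟩ := ha.path_unique _ _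
  have : q1 = q2 := congrArg Subtype.val this
  exact hne (by rw [← hg1, this, hg2])

lemma par_spec (hc : T.Connected) {v : V} (hv : v ≠ r) :
    T.Adj v (par T r v) ∧ dd T r (par T r v) + 1 = dd T r v := by
  have hex := exists_par hc hv
  rw [par, dif_pos hex]
  exact hex.choose_spec

lemma par_r : par T r r = r := by
  rw [par, dif_neg]
  rintro ⟨w, -, hd⟩
  rw [dd_r] at hd; omega

lemma adj_dd_ne (hc : T.Connected) (ha : T.IsAcyclic) {x y : V} (hadj : T.Adj x y) :
    dd T r x ≠ dd T r y := by
  intro heq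
  obtain ⟨p, hp, hl⟩ := hc.exists_path_of_dist x r
  have hxy : x ≠ y := hadj.ne
  have hyp : y ∉ p.support := by
    intro hmem
    have hdrop := SimpleGraph.dist_le (p.dropUntil y hmem)
    have hspec := SimpleGraph.Walk.take_spec p hmem
    have hlen : (p.takeUntil y hmem).length + (p.dropUntil y hmem).length = p.length := by
      rw [← SimpleGraph.Walk.length_append, hspec]
    have htl : (p.takeUntil y hmem).length ≠ 0 := by
      intro h0
      exact hxy (SimpleGraph.Walk.eq_of_length_eq_zero h0)
    unfold dd at heq
    omega
  obtain ⟨q, hq, hql⟩ := hc.exists_path_of_dist y r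
  have h1 : ((SimpleGraph.Walk.cons hadj.symm p) : T.Walk y r).IsPath := hp.cons hyp
  have : (⟨SimpleGraph.Walk.cons hadj.symm p, h1⟩ : T.Path y r) = ⟨q, hq⟩ := ha.path_unique _ _
  have hwq : SimpleGraph.Walk.cons hadj.symm p = q := congrArg Subtype.val this
  have : p.length + 1 = q.length := by
    rw [← hwq]; simp
  unfold dd at heq
  omega

/-- every edge is a parent edge in one direction -/
lemma adj_par_or (hc : T.Connected) (ha : T.IsAcyclic) {x y : V} (hadj : T.Adj x y) :
    (x ≠ r ∧ par T r x = y) ∨ (y ≠ r ∧ par T r y = x) := by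
  have hne := adj_dd_ne hc ha (r := r) hadj
  have h1 : dd T r x ≤ dd T r y + 1 := by
    have : T.dist x y = 1 := SimpleGraph.dist_eq_one_iff_adj.2 hadj
    have := hc.dist_triangle (u := x) (v := y) (w := r)
    unfold dd; omega
  have h2 : dd T r y ≤ dd T r x + 1 := by
    have : T.dist y x = 1 := SimpleGraph.dist_eq_one_iff_adj.2 hadj.symm
    have := hc.dist_triangle (u := y) (v := x) (w := r)
    unfold dd; omega
  rcases Nat.lt_or_ge (dd T r x) (dd T r y) with h | h
  · right
    have hy : y ≠ r := by
      intro hyr; rw [hyr, dd_r] at h; omega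
    exact ⟨hy, par_unique hc ha hadj.symm (by omega)⟩
  · left
    have hlt : dd T r y < dd T r x := lt_of_le_of_ne h (Ne.symm hne)
    have hx : x ≠ r := by
      intro hxr; rw [hxr, dd_r] at hlt; omega
    exact ⟨hx, par_unique hc ha hadj (by omega)⟩

end

section two
variable (T : SimpleGraph V) (r : V) (R : Finset V)

/-- `v` has a descendant (or itself) in `R` -/
def DD (v : V) : Prop := ∃ x ∈ R, ∃ k, (par T r)^[k] x = v

/-- number of children of `v` that have a descendant in `R` -/
noncomputable def kD (v : V) : ℕ :=
  (univ.filter (fun y => y ≠ r ∧ par T r y = v ∧ DD T r R y)).card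

/-- important vertices -/
def imp (v : V) : Prop := v ∈ R ∨ v = r ∨ 2 ≤ kD T r R v

noncomputable def F : ℕ → V → V
  | 0, _ => r
  | (k+1), v => if imp T r R (par T r v) then par T r v else F k (par T r v)

/-- first important proper ancestor -/
noncomputable def fi (v : V) : V := F T r R (dd T r v) v

/-- the part attached to an important vertex `u` -/
noncomputable def part (u : V) : Finset V :=
  univ.filter (fun v => v = u ∨ (¬ imp T r R v ∧ fi T r R v = u))

variable {T : SimpleGraph V} {r : V} {R : Finset V}

lemma dd_par (hc : T.Connected) {v : V} (hv : v ≠ r) :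
    dd T r (par T r v) + 1 = dd T r v := (par_spec hc hv).2

lemma iter_dd (hc : T.Connected) : ∀ (k : ℕ) (v : V), k ≤ dd T r v →
    dd T r ((par T r)^[k] v) + k = dd T r v := by
  intro k
  induction k with
  | zero => simp
  | succ k ih =>
    intro v hk
    have hv : v ≠ r := by
      intro h; rw [h, dd_r] at hk; omega
    have h1 := dd_par hc hv
    rw [Function.iterate_succ_apply]
    have := ih (par T r v) (by omega)
    omega

lemma iter_r (hc : T.Connected) (v : V) : (par T r)^[dd T r v] v = r := by
  have H : ∀ (n : ℕ) (v : V), dd T r v = n → (par T r)^[n] v = r := by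
    intro n
    induction n with
    | zero =>
      intro v h
      have : v = r := by
        by_contra hv
        have := dd_pos hc hv
        omega
      simpa using this
    | succ n ih =>
      intro v h
      have hv : v ≠ r := by
        intro hvr; rw [hvr, dd_r] at h; omega
      rw [Function.iterate_succ_apply]
      exact ih _ (by have := dd_par hc hv; omega)
  exact H _ v rfl

lemma DD_par {v : V} (h : DD T r R v) : DD T r R (par T r v) := by
  obtain ⟨x, hx, k, hk⟩ := h
  exact ⟨x, hx, k + 1, by rw [Function.iterate_succ_apply', hk]⟩

lemma DD_iter {v : V} (h : DD T r R v) (k : ℕ) : DD T r R ((par T r)^[k] v) := by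
  induction k with
  | zero => simpa using h
  | succ k ih => rw [Function.iterate_succ_apply']; exact DD_par ih

lemma DD_of_mem {x : V} (hx : x ∈ R) : DD T r R x := ⟨x, hx, 0, rfl⟩

lemma imp_r : imp T r R r := Or.inr (Or.inl rfl)

lemma imp_DD {v : V} (h : imp T r R v) (hv : v ≠ r) : DD T r R v := by
  rcases h with h | h | h
  · exact DD_of_mem h
  · exact absurd h hv
  · have : (univ.filter (fun y => y ≠ r ∧ par T r y = v ∧ DD T r R y)).Nonempty := by
      rw [← Finset.card_pos]; unfold kD at h; omega
    obtain ⟨y, hy⟩ := this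
    simp only [Finset.mem_filter] at hy
    rw [← hy.2.2.1]
    exact DD_par hy.2.2.2

lemma kD_pos {v : V} (h : DD T r R v) (hv : v ∉ R) : 1 ≤ kD T r R v := by
  classical
  obtain ⟨x, hx, k, hk⟩ := h
  have hex : ∃ k, (par T r)^[k] x = v := ⟨k, hk⟩
  have hspec : (par T r)^[Nat.find hex] x = v := Nat.find_spec hex
  rcases Nat.eq_zero_or_pos (Nat.find hex) with h0 | hpos
  · rw [h0] at hspec
    simp only [Function.iterate_zero, id] at hspec
    exact absurd (hspec ▸ hx) hv
  · have hc1 : (par T r) ((par T r)^[Nat.find hex - 1] x) = v := by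
      have := Function.iterate_succ_apply' (par T r) (Nat.find hex - 1) x
      rw [← this, show (Nat.find hex - 1).succ = Nat.find hex from by omega]
      exact hspec
    have hcr : (par T r)^[Nat.find hex - 1] x ≠ r := by
      intro hcr
      have : (par T r)^[Nat.find hex - 1] x = v := by
        rw [hcr] at hc1 ⊢
        rw [← hc1, par_r]
      exact Nat.find_min hex (by omega) this
    have hmem : (par T r)^[Nat.find hex - 1] x ∈
        univ.filter (fun y => y ≠ r ∧ par T r y = v ∧ DD T r R y) := by
      simp only [Finset.mem_filter]
      exact ⟨Finset.mem_univ _, hcr, hc1, ⟨x, hx, _, rfl⟩⟩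
    unfold kD
    have := Finset.card_pos.2 ⟨_, hmem⟩
    omega

lemma fi_step (hc : T.Connected) {v : V} (hv : v ≠ r) :
    fi T r R v = if imp T r R (par T r v) then par T r v else fi T r R (par T r v) := by
  have h := dd_par hc hv
  simp only [fi]
  rw [show dd T r v = dd T r (par T r v) + 1 by omega]
  rfl

lemma fi_imp (hc : T.Connected) {v : V} (hv : v ≠ r) : imp T r R (fi T r R v) := by
  have H : ∀ (n : ℕ) (v : V), dd T r v = n → v ≠ r → imp T r R (fi T r R v) := by
    intro n
    induction n using Nat.strong_induction_on with
    | _ n ih =>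
      intro v hdv hvr
      rw [fi_step hc hvr]
      split_ifs with h
      · exact h
      · have hpvr : par T r v ≠ r := fun hh => h (by rw [hh]; exact imp_r)
        exact ih (dd T r (par T r v)) (by have := dd_par hc hvr; omega) _ rfl hpvr
  exact H _ v rfl hv

lemma mem_part_iff {u v : V} :
    v ∈ part T r R u ↔ (v = u ∨ (¬ imp T r R v ∧ fi T r R v = u)) := by
  simp [part]

lemma mem_part_self (u : V) : u ∈ part T r R u := mem_part_iff.2 (Or.inl rfl)

lemma part_step (hc : T.Connected) {u v : V} (hv : v ∈ part T r R u) (hne : v ≠ u)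
    (himp : imp T r R u) :
    ¬ imp T r R v ∧ v ≠ r ∧ par T r v ∈ part T r R u ∧ T.Adj v (par T r v) := by
  rcases mem_part_iff.1 hv with h | ⟨h1, h2⟩
  · exact absurd h hne
  · have hvr : v ≠ r := fun hh => h1 (by rw [hh]; exact imp_r)
    refine ⟨h1, hvr, ?_, (par_spec hc hvr).1⟩

    rw [fi_step hc hvr] at h2
    split_ifs at h2 with h
    · rw [h2] at h ⊢
      exact mem_part_self u
    · exact mem_part_iff.2 (Or.inr ⟨h, h2⟩)

lemma part_chain (hc : T.Connected) {u v : V} (himp : imp T r R u) (hv : v ∈ part T r R u) :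
    dd T r u ≤ dd T r v ∧ (par T r)^[dd T r v - dd T r u] v = u ∧
      ∀ j ≤ dd T r v - dd T r u, (par T r)^[j] v ∈ part T r R u := by
  have H : ∀ (n : ℕ) (v : V), dd T r v = n → v ∈ part T r R u →
      dd T r u ≤ dd T r v ∧ (par T r)^[dd T r v - dd T r u] v = u ∧
      ∀ j ≤ dd T r v - dd T r u, (par T r)^[j] v ∈ part T r R u := by
    intro n
    induction n using Nat.strong_induction_on with
    | _ n ih =>
      intro v hdv hvmem
      by_cases hne : v = u
      · subst hne
        refine ⟨le_refl _, by simp, ?_⟩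
        intro j hj
        simp only [Nat.sub_self, Nat.le_zero] at hj
        simpa [hj] using hvmem
      · obtain ⟨h1, hvr, hpv, hadj⟩ := part_step hc hvmem hne himp
        have hdd := dd_par hc hvr
        obtain ⟨ih1, ih2, ih3⟩ := ih (dd T r (par T r v)) (by omega) _ rfl hpv
        have hle : dd T r u ≤ dd T r v := by omega
        have hsub : dd T r v - dd T r u = (dd T r (par T r v) - dd T r u) + 1 := by omega
        refine ⟨hle, ?_, ?_⟩
        · rw [hsub, Function.iterate_succ_apply]
          exact ih2
        · intro j hj
          match j with
          | 0 => simpa using hvmem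
          | (j+1) =>
            rw [Function.iterate_succ_apply]
            exact ih3 j (by omega)
  exact H _ v rfl hv

lemma dd_lt_of_mem_part (hc : T.Connected) {u v : V} (himp : imp T r R u)
    (hv : v ∈ part T r R u) (hne : v ≠ u) : dd T r u < dd T r v := by
  obtain ⟨h1, h2, -⟩ := part_chain hc himp hv
  rcases lt_or_eq_of_le h1 with h | h
  · exact h
  · exfalso
    rw [← h, Nat.sub_self] at h2
    simp at h2
    exact hne h2

/-- the deepest ancestor of `x` strictly below `u` -/
noncomputable def gg (T : SimpleGraph V) (r u x : V) : V :=
  (par T r)^[dd T r x - dd T r u - 1] x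

lemma not_imp_of_mem_part {u v : V} (hv : v ∈ part T r R u) (hne : v ≠ u) :
    ¬ imp T r R v := by
  rcases mem_part_iff.1 hv with h | ⟨h, -⟩
  · exact absurd h hne
  · exact h

lemma kD_two {m a1 a2 : V} (hne : a1 ≠ a2) (h1r : a1 ≠ r) (h1p : par T r a1 = m)
    (h1D : DD T r R a1) (h2r : a2 ≠ r) (h2p : par T r a2 = m) (h2D : DD T r R a2) :
    2 ≤ kD T r R m := by
  have hsub : ({a1, a2} : Finset V) ⊆
      univ.filter (fun y => y ≠ r ∧ par T r y = m ∧ DD T r R y) := by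
    intro z hz
    simp only [Finset.mem_insert, Finset.mem_singleton] at hz
    simp only [Finset.mem_filter, Finset.mem_univ, true_and]
    rcases hz with rfl | rfl
    · exact ⟨h1r, h1p, h1D⟩
    · exact ⟨h2r, h2p, h2D⟩
  calc 2 = ({a1, a2} : Finset V).card := (Finset.card_pair hne).symm
  _ ≤ _ := Finset.card_le_card hsub

lemma merge_core (hc : T.Connected) {u x1 x2 y1 : V} (himp : imp T r R u)
    (hx1 : x1 ∈ part T r R u) (hx1u : x1 ≠ u)
    (hx2 : x2 ∈ part T r R u) (hx2u : x2 ≠ u)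
    (hDx2 : DD T r R x2)
    (hy1r : y1 ≠ r) (hpy1 : par T r y1 = x1) (hiy1 : imp T r R y1)
    (hle : dd T r x1 ≤ dd T r x2) (hne : x1 ≠ x2)
    (hgg : gg T r u x1 = gg T r u x2) : False := by
  have hDy1 : DD T r R y1 := imp_DD hiy1 hy1r
  have hDx1 : DD T r R x1 := by rw [← hpy1]; exact DD_par hDy1
  obtain ⟨hle1, hit1, hmem1⟩ := part_chain hc himp hx1
  obtain ⟨hle2, hit2, hmem2⟩ := part_chain hc himp hx2
  have hdlt1 : dd T r u < dd T r x1 := dd_lt_of_mem_part hc himp hx1 hx1u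
  have hdlt2 : dd T r u < dd T r x2 := dd_lt_of_mem_part hc himp hx2 hx2u
  set e := dd T r x2 - dd T r x1 with he
  set w := (par T r)^[e] x2 with hw
  have hew : dd T r w + e = dd T r x2 := iter_dd hc e x2 (by omega)
  have hdw : dd T r w = dd T r x1 := by omega
  have hwmem : w ∈ part T r R u := hmem2 e (by omega)
  have hwu : w ≠ u := by
    intro h; rw [h] at hdw; omega
  have hDw : DD T r R w := DD_iter hDx2 e
  have hggw : gg T r u w = gg T r u x2 := by
    simp only [gg, hw]
    rw [← Function.iterate_add_apply, hdw,
      show dd T r x1 - dd T r u - 1 + e = dd T r x2 - dd T r u - 1 from by omega]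
  by_cases hwx : w = x1
  · -- the ancestor chain of x2 passes through x1
    have he1 : 1 ≤ e := by
      rcases Nat.eq_zero_or_pos e with h0 | h; · exfalso; rw [h0] at hw; simp at hw; exact hne (hwx ▸ hw.symm ▸ rfl)
      · exact h
    set a := (par T r)^[e - 1] x2 with ha
    have hpa : par T r a = x1 := by
      rw [← hwx, hw, ha]
      have h := Function.iterate_succ_apply' (par T r) (e-1) x2
      rw [show (e - 1).succ = e from by omega] at h
      exact h.symm
    have hamem : a ∈ part T r R u := hmem2 (e - 1) (by omega)
    have hda : dd T r a + (e - 1) = dd T r x2 := iter_dd hc _ x2 (by omega)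
    have hau : a ≠ u := by intro h; rw [h] at hda; omega
    have har : a ≠ r := by intro h; rw [h, dd_r] at hda; omega
    have haimp : ¬ imp T r R a := not_imp_of_mem_part hamem hau
    have hay : a ≠ y1 := fun h => haimp (h ▸ hiy1)
    have hDa : DD T r R a := DD_iter hDx2 (e - 1)
    have h2 : 2 ≤ kD T r R x1 := kD_two hay har hpa hDa hy1r hpy1 hDy1
    exact (not_imp_of_mem_part hx1 hx1u) (Or.inr (Or.inr h2))
  · -- genuine merge of the two chains
    have hitw : (par T r)^[dd T r x1 - dd T r u] w = u := by
      have := (part_chain hc himp hwmem).2.1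
      rwa [hdw] at this
    have hex : ∃ j, (par T r)^[j+1] x1 = (par T r)^[j+1] w := by
      refine ⟨dd T r x1 - dd T r u - 1, ?_⟩
      rw [show dd T r x1 - dd T r u - 1 + 1 = dd T r x1 - dd T r u from by omega, hit1, hitw]
    classical
    set J := Nat.find hex with hJdef
    have hJ : (par T r)^[J+1] x1 = (par T r)^[J+1] w := Nat.find_spec hex
    have hJle : J ≤ dd T r x1 - dd T r u - 1 := by
      apply Nat.find_min' hex
      rw [show dd T r x1 - dd T r u - 1 + 1 = dd T r x1 - dd T r u from by omega, hit1, hitw]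
    set a1 := (par T r)^[J] x1 with ha1
    set a2 := (par T r)^[J] w with ha2
    have hane : a1 ≠ a2 := by
      intro heq
      rcases Nat.eq_zero_or_pos J with h0 | hpos
      · rw [ha1, ha2, h0] at heq
        simp only [Function.iterate_zero, id] at heq
        exact hwx heq.symm
      · have hmin := Nat.find_min hex (show J - 1 < J from by omega)
        apply hmin
        rw [show J - 1 + 1 = J from by omega]
        exact heq
    have hpa1 : par T r a1 = (par T r)^[J+1] x1 := (Function.iterate_succ_apply' _ _ _).symm
    have hpa2 : par T r a2 = (par T r)^[J+1] x1 := by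
      rw [hJ]; exact (Function.iterate_succ_apply' _ _ _).symm
    have hda1 : dd T r a1 + J = dd T r x1 := iter_dd hc J x1 (by omega)
    have hda2 : dd T r a2 + J = dd T r w := iter_dd hc J w (by omega)
    have ha1r : a1 ≠ r := by intro h; rw [h, dd_r] at hda1; omega
    have ha2r : a2 ≠ r := by intro h; rw [h, dd_r] at hda2; omega
    have hDa1 : DD T r R a1 := DD_iter hDx1 J
    have hDa2 : DD T r R a2 := DD_iter hDw J
    by_cases hJt : J + 1 = dd T r x1 - dd T r u
    · -- merge happens exactly at u: both a's equal gg
      have e1 : a1 = gg T r u x1 := by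
        simp only [gg, ha1]
        rw [show dd T r x1 - dd T r u - 1 = J from by omega]
      have e2 : a2 = gg T r u w := by
        simp only [gg, ha2, hdw]
        rw [show dd T r x1 - dd T r u - 1 = J from by omega]
      exact hane (by rw [e1, e2, hggw, ← hgg])
    · -- merge strictly below u: the merge point has two DD-children
      set m := (par T r)^[J+1] x1 with hm
      have hmmem : m ∈ part T r R u := hmem1 (J+1) (by omega)
      have hdm : dd T r m + (J+1) = dd T r x1 := iter_dd hc _ x1 (by omega)
      have hmu : m ≠ u := by intro h; rw [h] at hdm; omega
      have h2 : 2 ≤ kD T r R m := kD_two hane ha1r hpa1 hDa1 ha2r hpa2 hDa2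
      exact (not_imp_of_mem_part hmmem hmu) (Or.inr (Or.inr h2))

noncomputable def childs (T : SimpleGraph V) (r u : V) : Finset V :=
  univ.filter (fun y => y ≠ r ∧ par T r y = u)

lemma card_childs_le (hc : T.Connected) [DecidableRel T.Adj]
    (hdeg : ∀ v, T.degree v ≤ 3) (u : V) : (childs T r u).card ≤ 3 := by
  have hsub : childs T r u ⊆ T.neighborFinset u := by
    intro y hy
    simp only [childs, Finset.mem_filter, Finset.mem_univ, true_and] at hy
    have := (par_spec hc hy.1).1
    rw [hy.2] at this
    rw [SimpleGraph.mem_neighborFinset]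
    exact this.symm
  calc (childs T r u).card ≤ (T.neighborFinset u).card := Finset.card_le_card hsub
  _ = T.degree u := T.card_neighborFinset_eq_degree u
  _ ≤ 3 := hdeg u

lemma gg_spec (hc : T.Connected) {u x : V} (himp : imp T r R u) (hx : x ∈ part T r R u)
    (hxu : x ≠ u) : gg T r u x ∈ part T r R u ∧ gg T r u x ≠ u ∧
      par T r (gg T r u x) = u ∧ gg T r u x ≠ r := by
  obtain ⟨hle, hit, hmem⟩ := part_chain hc himp hx
  have hlt := dd_lt_of_mem_part hc himp hx hxu
  have hgmem : gg T r u x ∈ part T r R u := by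
    have := hmem (dd T r x - dd T r u - 1) (by omega)
    simpa [gg] using this
  have hdg : dd T r (gg T r u x) + (dd T r x - dd T r u - 1) = dd T r x := by
    have := iter_dd (r := r) hc (dd T r x - dd T r u - 1) x (by omega)
    simpa [gg] using this
  have hgu : gg T r u x ≠ u := by intro h; rw [h] at hdg; omega
  have hgr : gg T r u x ≠ r := by intro h; rw [h, dd_r] at hdg; omega
  have hpg : par T r (gg T r u x) = u := by
    have h2 := Function.iterate_succ_apply' (par T r) (dd T r x - dd T r u - 1) x
    rw [show (dd T r x - dd T r u - 1).succ = dd T r x - dd T r u from by omega] at h2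
    simp only [gg]
    rw [← h2, hit]
  exact ⟨hgmem, hgu, hpg, hgr⟩

lemma boundary_le (hc : T.Connected) (ha : T.IsAcyclic) [DecidableRel T.Adj]
    (hdeg : ∀ v, T.degree v ≤ 3) {u : V} (himp : imp T r R u) :
    Set.ncard {p : V × V | T.Adj p.1 p.2 ∧ p.1 ∈ part T r R u ∧ p.2 ∉ part T r R u} ≤ 4 := by
  classical
  have hset : {p : V × V | T.Adj p.1 p.2 ∧ p.1 ∈ part T r R u ∧ p.2 ∉ part T r R u} =
      ↑(univ.filter (fun p : V × V =>
        T.Adj p.1 p.2 ∧ p.1 ∈ part T r R u ∧ p.2 ∉ part T r R u)) := by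
    ext p; simp
  rw [hset, Set.ncard_coe_finset]
  have hsplit : (univ.filter (fun p : V × V =>
        T.Adj p.1 p.2 ∧ p.1 ∈ part T r R u ∧ p.2 ∉ part T r R u)) ⊆
      {(u, par T r u)} ∪ (univ.filter (fun p : V × V => p.1 ∈ part T r R u ∧
        p.2 ∉ part T r R u ∧ p.2 ≠ r ∧ par T r p.2 = p.1 ∧ imp T r R p.2)) := by
    intro p hp
    simp only [Finset.mem_filter, Finset.mem_univ, true_and] at hp
    obtain ⟨hadj, h1, h2⟩ := hp
    rw [Finset.mem_union]
    rcases adj_par_or hc ha hadj with ⟨hxr, hpx⟩ | ⟨hyr, hpy⟩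
    · left
      have hx : p.1 = u := by
        by_contra hneq
        have := (part_step hc h1 hneq himp).2.2.1
        rw [hpx] at this
        exact h2 this
      have hy : p.2 = par T r u := by rw [← hpx, hx]
      simp only [Finset.mem_singleton]
      exact Prod.ext hx hy
    · right
      simp only [Finset.mem_filter, Finset.mem_univ, true_and]
      refine ⟨h1, h2, hyr, hpy, ?_⟩
      by_contra hni
      have hstep := fi_step hc hyr (R := R)
      rcases mem_part_iff.1 h1 with h1u | ⟨hn1, hf1⟩
      · have : fi T r R p.2 = u := by
          rw [hstep, hpy, h1u, if_pos himp]
        exact h2 (mem_part_iff.2 (Or.inr ⟨hni, this⟩))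
      · have : fi T r R p.2 = u := by
          rw [hstep, hpy, if_neg hn1, hf1]
        exact h2 (mem_part_iff.2 (Or.inr ⟨hni, this⟩))
  calc (univ.filter (fun p : V × V =>
        T.Adj p.1 p.2 ∧ p.1 ∈ part T r R u ∧ p.2 ∉ part T r R u)).card
      ≤ ({(u, par T r u)} ∪ (univ.filter (fun p : V × V => p.1 ∈ part T r R u ∧
        p.2 ∉ part T r R u ∧ p.2 ≠ r ∧ par T r p.2 = p.1 ∧ imp T r R p.2))).card :=
        Finset.card_le_card hsplit
  _ ≤ 1 + (univ.filter (fun p : V × V => p.1 ∈ part T r R u ∧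
        p.2 ∉ part T r R u ∧ p.2 ≠ r ∧ par T r p.2 = p.1 ∧ imp T r R p.2)).card := by
        have := Finset.card_union_le ({(u, par T r u)} : Finset (V × V))
          (univ.filter (fun p : V × V => p.1 ∈ part T r R u ∧
            p.2 ∉ part T r R u ∧ p.2 ≠ r ∧ par T r p.2 = p.1 ∧ imp T r R p.2))
        simpa using this
  _ ≤ 1 + 3 := by
        have hinj : ∀ p ∈ (univ.filter (fun p : V × V => p.1 ∈ part T r R u ∧
            p.2 ∉ part T r R u ∧ p.2 ≠ r ∧ par T r p.2 = p.1 ∧ imp T r R p.2)),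
            (if p.1 = u then p.2 else gg T r u p.1) ∈ childs T r u := by
          intro p hp
          simp only [Finset.mem_filter, Finset.mem_univ, true_and] at hp
          obtain ⟨h1, h2, hyr, hpy, hiy⟩ := hp
          by_cases hx : p.1 = u
          · rw [if_pos hx]
            simp only [childs, Finset.mem_filter, Finset.mem_univ, true_and]
            exact ⟨hyr, by rw [hpy, hx]⟩
          · rw [if_neg hx]
            obtain ⟨hg1, hg2, hg3, hg4⟩ := gg_spec hc himp h1 hx
            simp only [childs, Finset.mem_filter, Finset.mem_univ, true_and]
            exact ⟨hg4, hg3⟩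
        have hinj2 : Set.InjOn (fun p : V × V => if p.1 = u then p.2 else gg T r u p.1)
            (univ.filter (fun p : V × V => p.1 ∈ part T r R u ∧
            p.2 ∉ part T r R u ∧ p.2 ≠ r ∧ par T r p.2 = p.1 ∧ imp T r R p.2)) := by
          intro p hp q hq heq
          simp only [Finset.coe_filter, Set.mem_setOf_eq, Finset.mem_univ, true_and] at hp hq
          obtain ⟨hp1, hp2, hpyr, hppy, hpiy⟩ := hp
          obtain ⟨hq1, hq2, hqyr, hqpy, hqiy⟩ := hq
          simp only at heq
          by_cases hpu : p.1 = u <;> by_cases hqu : q.1 = u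
          · rw [if_pos hpu, if_pos hqu] at heq
            exact Prod.ext (hpu.trans hqu.symm) heq
          · rw [if_pos hpu, if_neg hqu] at heq
            exfalso
            obtain ⟨hg1, hg2, -, -⟩ := gg_spec hc himp hq1 hqu
            exact (not_imp_of_mem_part hg1 hg2) (heq ▸ hpiy)
          · rw [if_neg hpu, if_pos hqu] at heq
            exfalso
            obtain ⟨hg1, hg2, -, -⟩ := gg_spec hc himp hp1 hpu
            exact (not_imp_of_mem_part hg1 hg2) (heq ▸ hqiy)
          · rw [if_neg hpu, if_neg hqu] at heq
            by_cases hpq : p.1 = q.1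
            · -- same lower vertex: the two important children coincide
              by_cases hyy : p.2 = q.2
              · exact Prod.ext hpq hyy
              · exfalso
                have hk := kD_two hyy hpyr hppy (imp_DD hpiy hpyr) hqyr
                  (by rw [hqpy, ← hpq]) (imp_DD hqiy hqyr)
                exact (not_imp_of_mem_part hp1 hpu) (Or.inr (Or.inr hk))
            · exfalso
              have hDq : DD T r R q.1 := by
                rw [← hqpy]; exact DD_par (imp_DD hqiy hqyr)
              have hDp : DD T r R p.1 := by
                rw [← hppy]; exact DD_par (imp_DD hpiy hpyr)
              rcases le_total (dd T r p.1) (dd T r q.1) with hle | hle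
              · exact merge_core hc himp hp1 hpu hq1 hqu hDq hpyr hppy hpiy hle hpq heq
              · exact merge_core hc himp hq1 hqu hp1 hpu hDp hqyr hqpy hqiy hle
                  (fun h => hpq h.symm) heq.symm
        have := Finset.card_le_card_of_injOn _ hinj hinj2
        have h3 := card_childs_le (r := r) hc hdeg u
        omega
  _ ≤ 4 := by omega

lemma part_connected (hc : T.Connected) {u : V} (himp : imp T r R u) :
    (T.induce ((part T r R u : Finset V) : Set V)).Connected := by
  rw [SimpleGraph.connected_iff_exists_forall_reachable]
  have humem : u ∈ ((part T r R u : Finset V) : Set V) := by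
    simp only [Finset.coe_sort_coe, Finset.mem_coe]
    exact mem_part_self u
  refine ⟨⟨u, humem⟩, ?_⟩
  have H : ∀ (n : ℕ) (v : V) (hv : v ∈ ((part T r R u : Finset V) : Set V)), dd T r v = n →
      (T.induce ((part T r R u : Finset V) : Set V)).Reachable ⟨v, hv⟩ ⟨u, humem⟩ := by
    intro n
    induction n using Nat.strong_induction_on with
    | _ n ih =>
      intro v hv hdv
      by_cases hvu : v = u
      · subst hvu
        rfl
      · have hvmem : v ∈ part T r R u := Finset.mem_coe.1 hv
        obtain ⟨hni, hvr, hpmem, hadj⟩ := part_step hc hvmem hvu himp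
        have hpmem' : par T r v ∈ ((part T r R u : Finset V) : Set V) := Finset.mem_coe.2 hpmem
        have hadj' : (T.induce ((part T r R u : Finset V) : Set V)).Adj ⟨v, hv⟩
            ⟨par T r v, hpmem'⟩ := by
          simp only [SimpleGraph.comap_adj, Function.Embedding.coe_subtype]
          exact hadj
        have hdd := dd_par hc hvr
        exact (hadj'.reachable).trans (ih (dd T r (par T r v)) (by omega) _ hpmem' rfl)
  rintro ⟨v, hv⟩
  exact (H (dd T r v) v hv rfl).symm

lemma DD_of_kD {v : V} (h : 1 ≤ kD T r R v) : DD T r R v := by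
  have : (univ.filter (fun y => y ≠ r ∧ par T r y = v ∧ DD T r R y)).Nonempty := by
    rw [← Finset.card_pos]; unfold kD at h; omega
  obtain ⟨y, hy⟩ := this
  simp only [Finset.mem_filter] at hy
  rw [← hy.2.2.1]
  exact DD_par hy.2.2.2

lemma card_imp_le (hc : T.Connected) :
    (univ.filter (fun v => imp T r R v)).card ≤ 2 * R.card + 1 := by
  classical
  have hmap : ∀ y ∈ (univ.filter (fun v => DD T r R v)).erase r,
      par T r y ∈ univ.filter (fun v => DD T r R v) := by
    intro y hy
    simp only [Finset.mem_erase, Finset.mem_filter, Finset.mem_univ, true_and] at hy ⊢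
    exact DD_par hy.2
  have hcount := Finset.card_eq_sum_card_fiberwise hmap
  have hsum : ∑ v ∈ univ.filter (fun v => DD T r R v), kD T r R v =
      ((univ.filter (fun v => DD T r R v)).erase r).card := by
    rw [hcount]
    apply Finset.sum_congr rfl
    intro v hv
    unfold kD
    congr 1
    ext y
    simp only [Finset.mem_filter, Finset.mem_erase, Finset.mem_univ, true_and]
    tauto
  have hpt : ∑ v ∈ univ.filter (fun v => DD T r R v),
      ((if 2 ≤ kD T r R v then 1 else 0) + (if 1 ≤ kD T r R v then 1 else 0)) ≤
      ∑ v ∈ univ.filter (fun v => DD T r R v), kD T r R v := by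
    apply Finset.sum_le_sum
    intro v hv
    split_ifs <;> omega
  rw [Finset.sum_add_distrib] at hpt
  have hB : ∑ v ∈ univ.filter (fun v => DD T r R v), (if 2 ≤ kD T r R v then 1 else 0) =
      ((univ.filter (fun v => DD T r R v)).filter (fun v => 2 ≤ kD T r R v)).card := by
    rw [Finset.card_filter]
  have h1 : ∑ v ∈ univ.filter (fun v => DD T r R v), (if 1 ≤ kD T r R v then 1 else 0) =
      ((univ.filter (fun v => DD T r R v)).filter (fun v => 1 ≤ kD T r R v)).card := by
    rw [Finset.card_filter]
  rw [hB, h1, hsum] at hpt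
  -- leaves are in R
  have hleaf : (univ.filter (fun v => DD T r R v)).filter (fun v => ¬ 1 ≤ kD T r R v) ⊆ R := by
    intro v hv
    simp only [Finset.mem_filter, Finset.mem_univ, true_and, not_le, Nat.lt_one_iff] at hv
    by_contra hvR
    have := kD_pos hv.1 hvR
    omega
  have hsplitc := Finset.card_filter_add_card_filter_not
    (s := univ.filter (fun v => DD T r R v)) (p := fun v => 1 ≤ kD T r R v)
  have herase : ((univ.filter (fun v => DD T r R v)).erase r).card ≤
      (univ.filter (fun v => DD T r R v)).card := Finset.card_le_card (Finset.erase_subset _ _)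
  have hleafcard := Finset.card_le_card hleaf
  -- branch count bound
  have hbranch2 : (univ.filter (fun v => 2 ≤ kD T r R v)) =
      ((univ.filter (fun v => DD T r R v)).filter (fun v => 2 ≤ kD T r R v)) := by
    ext v
    simp only [Finset.mem_filter, Finset.mem_univ, true_and]
    constructor
    · intro h
      exact ⟨DD_of_kD (by omega), h⟩
    · tauto
  have hbranch : (univ.filter (fun v => 2 ≤ kD T r R v)).card ≤ R.card := by
    rw [hbranch2]; omega
  -- imp set decomposition
  have himps : univ.filter (fun v => imp T r R v) ⊆
      (R ∪ {r}) ∪ univ.filter (fun v => 2 ≤ kD T r R v) := by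
    intro v hv
    have hv0 : imp T r R v := (Finset.mem_filter.1 hv).2
    simp only [Finset.mem_filter, Finset.mem_univ, true_and, imp] at hv
    simp only [Finset.mem_union, Finset.mem_singleton, Finset.mem_filter, Finset.mem_univ,
      true_and]
    unfold imp at hv0
    tauto
  have := Finset.card_le_card himps
  have hu1 := Finset.card_union_le (R ∪ {r}) (univ.filter (fun v => 2 ≤ kD T r R v))
  have hu2 := Finset.card_union_le R ({r} : Finset V)
  simp only [Finset.card_singleton] at hu2
  omega

end two
end Stmt18Aux

theorem stmt18 :
    ∃ Cc : ℕ, ∀ (V : Type) [Fintype V] [DecidableEq V]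
      (T : SimpleGraph V) [DecidableRel T.Adj],
      T.Connected → T.IsAcyclic → (∀ v : V, T.degree v ≤ 3) →
      ∀ R : Finset V,
      ∃ P : Finset (Finset V),
        (∀ S ∈ P, S.Nonempty) ∧
        (∀ S ∈ P, ∀ S' ∈ P, S ≠ S' → Disjoint S S') ∧
        (∀ v : V, ∃ S ∈ P, v ∈ S) ∧
        (∀ S ∈ P, (T.induce (S : Set V)).Connected) ∧
        (∀ S ∈ P, (S ∩ R).card ≤ 3) ∧
        (∀ S ∈ P, Set.ncard {p : V × V | T.Adj p.1 p.2 ∧ p.1 ∈ S ∧ p.2 ∉ S} ≤ 4) ∧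
        P.card ≤ (R.card + 2) ^ Cc := by
  classical
  refine ⟨2, ?_⟩
  intro V _ _ T _ hc ha hdeg R
  have hnev : Nonempty V := hc.nonempty
  set r := Classical.arbitrary V with hr
  refine ⟨(univ.filter (fun v => Stmt18Aux.imp T r R v)).image
    (fun u => Stmt18Aux.part T r R u), ?_, ?_, ?_, ?_, ?_, ?_, ?_⟩
  · -- nonempty
    intro S hS
    obtain ⟨u, hu, rfl⟩ := Finset.mem_image.1 hS
    exact ⟨u, Stmt18Aux.mem_part_self u⟩
  · -- pairwise disjoint
    intro S hS S' hS' hne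
    obtain ⟨u, hu, rfl⟩ := Finset.mem_image.1 hS
    obtain ⟨u', hu', rfl⟩ := Finset.mem_image.1 hS'
    have hiu : Stmt18Aux.imp T r R u := (Finset.mem_filter.1 hu).2
    have hiu' : Stmt18Aux.imp T r R u' := (Finset.mem_filter.1 hu').2
    rw [Finset.disjoint_left]
    intro a ha ha'
    rcases Stmt18Aux.mem_part_iff.1 ha with h1 | ⟨h1, h1f⟩ <;>
      rcases Stmt18Aux.mem_part_iff.1 ha' with h2 | ⟨h2, h2f⟩
    · exact hne (by rw [show u = u' from by rw [← h1, ← h2]])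
    · exact h2 (h1 ▸ hiu)
    · exact h1 (h2 ▸ hiu')
    · exact hne (by rw [show u = u' from by rw [← h1f, ← h2f]])
  · -- cover
    intro v
    by_cases h : Stmt18Aux.imp T r R v
    · exact ⟨Stmt18Aux.part T r R v,
        Finset.mem_image.2 ⟨v, Finset.mem_filter.2 ⟨Finset.mem_univ _, h⟩, rfl⟩,
        Stmt18Aux.mem_part_self v⟩
    · have hvr : v ≠ r := fun hh => h (by rw [hh]; exact Stmt18Aux.imp_r)
      exact ⟨Stmt18Aux.part T r R (Stmt18Aux.fi T r R v),
        Finset.mem_image.2 ⟨Stmt18Aux.fi T r R v,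
          Finset.mem_filter.2 ⟨Finset.mem_univ _, Stmt18Aux.fi_imp hc hvr⟩, rfl⟩,
        Stmt18Aux.mem_part_iff.2 (Or.inr ⟨h, rfl⟩)⟩
  · -- connected
    intro S hS
    obtain ⟨u, hu, rfl⟩ := Finset.mem_image.1 hS
    exact Stmt18Aux.part_connected hc (Finset.mem_filter.1 hu).2
  · -- at most 3 vertices of R
    intro S hS
    obtain ⟨u, hu, rfl⟩ := Finset.mem_image.1 hS
    have hsub : Stmt18Aux.part T r R u ∩ R ⊆ {u} := by
      intro v hv
      rw [Finset.mem_inter] at hv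
      rw [Finset.mem_singleton]
      by_contra hvu
      exact (Stmt18Aux.not_imp_of_mem_part hv.1 hvu) (Or.inl hv.2)
    calc (Stmt18Aux.part T r R u ∩ R).card ≤ ({u} : Finset V).card :=
      Finset.card_le_card hsub
    _ ≤ 3 := by simp
  · -- boundary
    intro S hS
    obtain ⟨u, hu, rfl⟩ := Finset.mem_image.1 hS
    exact Stmt18Aux.boundary_le hc ha hdeg (Finset.mem_filter.1 hu).2
  · -- number of parts
    calc ((univ.filter (fun v => Stmt18Aux.imp T r R v)).image
        (fun u => Stmt18Aux.part T r R u)).card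
        ≤ (univ.filter (fun v => Stmt18Aux.imp T r R v)).card := Finset.card_image_le
    _ ≤ 2 * R.card + 1 := Stmt18Aux.card_imp_le hc
    _ ≤ (R.card + 2) ^ 2 := by
        have : (R.card + 2) ^ 2 = R.card * R.card + 4 * R.card + 4 := by ring
        omega
end
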